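/- arXiv:2406.06868 — 7 statements merged into one kernel-verified Lean document; each statement's English description precedes it below -/
import Mathlib

section
/- Let X₀, X₁, …, X_n be measurable spaces, let μ be a probability measure on X₀, and for each i ∈ {1, …, n} let κ_i and η_i be Markov kernels from X₀ × ⋯ × X_{i−1} to X_i. Form the trajectory measures P_κ = μ ⊗ κ₁ ⊗ ⋯ ⊗ κ_n and P_η = μ ⊗ η₁ ⊗ ⋯ ⊗ η_n on X₀ × ⋯ × X_n by iterated composition-product. If for each i one has sup over histories h ∈ X₀ × ⋯ × X_{i−1} of ‖κ_i(h) − η_i(h)‖_TV ≤ ε_i, then ‖P_κ − P_η‖_TV ≤ Σ_{i=1}^n ε_i. (This telescoping bound controls, uniformly over partitions, the difference between two discretized path measures built from treatment/covariate kernels that are close step-by-step in total variation.) -/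
open MeasureTheory ProbabilityTheory
open scoped ENNReal NNReal

/-- Total variation norm of the difference of two finite measures:
`‖μ − ν‖_TV = |μ − ν|(X)`, the total mass of the total variation measure of the
signed measure `μ − ν`. -/
noncomputable def tvDist {α : Type*} [MeasurableSpace α] (μ ν : Measure α)
    [IsFiniteMeasure μ] [IsFiniteMeasure ν] : ℝ≥0∞ :=
  (μ.toSignedMeasure - ν.toSignedMeasure).totalVariation Set.univ

/-- The space of histories (trajectories) `X₀ × ⋯ × Xₙ`, built as iterated
binary products. -/
def Hist (X : ℕ → Type*) : ℕ → Type _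
  | 0 => X 0
  | n + 1 => Hist X n × X (n + 1)

noncomputable instance Hist.instMeasurableSpace (X : ℕ → Type*)
    [∀ i, MeasurableSpace (X i)] : ∀ n, MeasurableSpace (Hist X n)
  | 0 => inferInstanceAs (MeasurableSpace (X 0))
  | n + 1 => @Prod.instMeasurableSpace _ _ (Hist.instMeasurableSpace X n) _

/-- The trajectory measure `μ ⊗ κ₁ ⊗ ⋯ ⊗ κₙ` on `X₀ × ⋯ × Xₙ`, built by
iterated composition-product of the initial law `μ` with the history-dependent
Markov kernels `κ i : Hist X i → Prob (X (i+1))`. -/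
noncomputable def traj {X : ℕ → Type*} [∀ i, MeasurableSpace (X i)]
    (μ : Measure (X 0)) (κ : ∀ i, Kernel (Hist X i) (X (i + 1))) :
    ∀ n, Measure (Hist X n)
  | 0 => μ
  | n + 1 => (traj μ κ n) ⊗ₘ (κ n)

instance traj.instIsProbabilityMeasure {X : ℕ → Type*} [∀ i, MeasurableSpace (X i)]
    (μ : Measure (X 0)) [IsProbabilityMeasure μ]
    (κ : ∀ i, Kernel (Hist X i) (X (i + 1))) [∀ i, IsMarkovKernel (κ i)] :
    ∀ n, IsProbabilityMeasure (traj μ κ n)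
  | 0 => inferInstanceAs (IsProbabilityMeasure μ)
  | n + 1 => by
      haveI := traj.instIsProbabilityMeasure μ κ n
      exact inferInstanceAs (IsProbabilityMeasure ((traj μ κ n) ⊗ₘ (κ n)))

section Aux

variable {α : Type*} [MeasurableSpace α] (μ ν : Measure α)
  [IsFiniteMeasure μ] [IsFiniteMeasure ν]

lemma tv_sm_apply {A : Set α} (hA : MeasurableSet A) :
    (μ.toSignedMeasure - ν.toSignedMeasure) A = (μ A).toReal - (ν A).toReal := by
  rw [VectorMeasure.sub_apply, Measure.toSignedMeasure_apply_measurable hA,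
    Measure.toSignedMeasure_apply_measurable hA]
  rfl

lemma tv_ofReal_sub {A : Set α} :
    ENNReal.ofReal ((μ A).toReal - (ν A).toReal) = μ A - ν A := by
  rw [ENNReal.ofReal_sub _ ENNReal.toReal_nonneg, ENNReal.ofReal_toReal (measure_ne_top μ A),
    ENNReal.ofReal_toReal (measure_ne_top ν A)]

lemma le_tvDist {A : Set α} (hA : MeasurableSet A) :
    (μ A - ν A) + (ν Aᶜ - μ Aᶜ) ≤ tvDist μ ν := by
  set s := μ.toSignedMeasure - ν.toSignedMeasure with hs
  have hj : s.toJordanDecomposition.toSignedMeasure = s :=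
    s.toSignedMeasure_toJordanDecomposition
  set p := s.toJordanDecomposition.posPart
  set q := s.toJordanDecomposition.negPart
  have happ : ∀ B : Set α, MeasurableSet B → s B = (p B).toReal - (q B).toReal := by
    intro B hB
    conv_lhs => rw [← hj]
    rw [JordanDecomposition.toSignedMeasure, VectorMeasure.sub_apply,
      Measure.toSignedMeasure_apply_measurable hB, Measure.toSignedMeasure_apply_measurable hB]
    rfl
  have h1 : μ A - ν A ≤ p Set.univ := by
    rw [← tv_ofReal_sub, ← tv_sm_apply μ ν hA]
    calc ENNReal.ofReal (s A) ≤ ENNReal.ofReal ((p A).toReal) := by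
          apply ENNReal.ofReal_le_ofReal
          rw [happ A hA]
          simp [ENNReal.toReal_nonneg]
      _ = p A := ENNReal.ofReal_toReal (measure_ne_top p A)
      _ ≤ p Set.univ := measure_mono (Set.subset_univ A)
  have h2 : ν Aᶜ - μ Aᶜ ≤ q Set.univ := by
    rw [← tv_ofReal_sub, ← neg_sub, ← tv_sm_apply μ ν hA.compl]
    calc ENNReal.ofReal (-(s Aᶜ)) ≤ ENNReal.ofReal ((q Aᶜ).toReal) := by
          apply ENNReal.ofReal_le_ofReal
          rw [happ Aᶜ hA.compl]
          simp [ENNReal.toReal_nonneg]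
      _ = q Aᶜ := ENNReal.ofReal_toReal (measure_ne_top q Aᶜ)
      _ ≤ q Set.univ := measure_mono (Set.subset_univ _)
  calc (μ A - ν A) + (ν Aᶜ - μ Aᶜ) ≤ p Set.univ + q Set.univ := add_le_add h1 h2
    _ = tvDist μ ν := by
      rw [tvDist, SignedMeasure.totalVariation, Measure.add_apply]

lemma tvDist_eq_of_measurableSet :
    ∃ A : Set α, MeasurableSet A ∧ tvDist μ ν = (μ A - ν A) + (ν Aᶜ - μ Aᶜ) := by
  set s := μ.toSignedMeasure - ν.toSignedMeasure with hs
  obtain ⟨i, hi₁, hi₂, hi₃, hpos, hneg⟩ := s.toJordanDecomposition_spec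
  refine ⟨i, hi₁, ?_⟩
  rw [tvDist, SignedMeasure.totalVariation, Measure.add_apply, hpos, hneg,
    SignedMeasure.toMeasureOfZeroLE_apply _ _ _ MeasurableSet.univ,
    SignedMeasure.toMeasureOfLEZero_apply _ _ _ MeasurableSet.univ]
  have gen : ∀ (x : ℝ) (h : 0 ≤ x), ENNReal.ofNNReal (NNReal.mk x h) = ENNReal.ofReal x := by
    intro x h
    rw [ENNReal.ofReal]
    congr 1
    exact (Real.toNNReal_of_nonneg h).symm
  rw [gen, gen, Set.inter_univ, Set.inter_univ, tv_sm_apply μ ν hi₁,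
    tv_sm_apply μ ν hi₁.compl, neg_sub, tv_ofReal_sub, tv_ofReal_sub]

lemma tvDist_le_of (c : ℝ≥0∞)
    (h : ∀ A : Set α, MeasurableSet A → (μ A - ν A) + (ν Aᶜ - μ Aᶜ) ≤ c) :
    tvDist μ ν ≤ c := by
  obtain ⟨A, hA, hEq⟩ := tvDist_eq_of_measurableSet μ ν
  rw [hEq]; exact h A hA

lemma tvDist_self : tvDist μ μ = 0 := by
  rw [tvDist, sub_self, SignedMeasure.totalVariation_zero]; rfl

lemma tvDist_triangle (ρ : Measure α) [IsFiniteMeasure ρ] :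
    tvDist μ ρ ≤ tvDist μ ν + tvDist ν ρ := by
  apply tvDist_le_of
  intro A hA
  calc (μ A - ρ A) + (ρ Aᶜ - μ Aᶜ)
      ≤ ((μ A - ν A) + (ν A - ρ A)) + ((ρ Aᶜ - ν Aᶜ) + (ν Aᶜ - μ Aᶜ)) :=
        add_le_add tsub_le_tsub_add_tsub tsub_le_tsub_add_tsub
    _ = ((μ A - ν A) + (ν Aᶜ - μ Aᶜ)) + ((ν A - ρ A) + (ρ Aᶜ - ν Aᶜ)) := by ring
    _ ≤ tvDist μ ν + tvDist ν ρ := add_le_add (le_tvDist μ ν hA) (le_tvDist ν ρ hA)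

lemma jordan_measure_add_eq :
    μ + (μ.toSignedMeasure - ν.toSignedMeasure).toJordanDecomposition.negPart
      = ν + (μ.toSignedMeasure - ν.toSignedMeasure).toJordanDecomposition.posPart := by
  set s := μ.toSignedMeasure - ν.toSignedMeasure with hs
  set p := s.toJordanDecomposition.posPart
  set q := s.toJordanDecomposition.negPart
  have hj : s.toJordanDecomposition.toSignedMeasure = s :=
    s.toSignedMeasure_toJordanDecomposition
  ext A hA
  have happ : (p A).toReal - (q A).toReal = (μ A).toReal - (ν A).toReal := by
    rw [← tv_sm_apply μ ν hA, ← hs]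
    conv_rhs => rw [← hj]
    rw [JordanDecomposition.toSignedMeasure, VectorMeasure.sub_apply,
      Measure.toSignedMeasure_apply_measurable hA, Measure.toSignedMeasure_apply_measurable hA]
    rfl
  rw [Measure.add_apply, Measure.add_apply]
  rw [← ENNReal.toReal_eq_toReal_iff' (by finiteness) (by finiteness)]
  rw [ENNReal.toReal_add (measure_ne_top _ _) (measure_ne_top _ _),
    ENNReal.toReal_add (measure_ne_top _ _) (measure_ne_top _ _)]
  linarith

lemma lintegral_tsub_add_le {f g : α → ℝ≥0∞} (hf : Measurable f) (hg : Measurable g)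
    (hf1 : ∀ x, f x ≤ 1) (hg1 : ∀ x, g x ≤ 1) :
    (∫⁻ x, f x ∂μ - ∫⁻ x, f x ∂ν) + (∫⁻ x, g x ∂ν - ∫⁻ x, g x ∂μ) ≤ tvDist μ ν := by
  set s := μ.toSignedMeasure - ν.toSignedMeasure with hs
  set p := s.toJordanDecomposition.posPart
  set q := s.toJordanDecomposition.negPart
  have key : μ + q = ν + p := jordan_measure_add_eq μ ν
  have h1 : ∫⁻ x, f x ∂μ - ∫⁻ x, f x ∂ν ≤ p Set.univ := by
    rw [tsub_le_iff_right]
    calc ∫⁻ x, f x ∂μ ≤ ∫⁻ x, f x ∂μ + ∫⁻ x, f x ∂q := le_self_add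
      _ = ∫⁻ x, f x ∂(μ + q) := (lintegral_add_measure _ _ _).symm
      _ = ∫⁻ x, f x ∂(ν + p) := by rw [key]
      _ = ∫⁻ x, f x ∂ν + ∫⁻ x, f x ∂p := lintegral_add_measure _ _ _
      _ ≤ ∫⁻ x, f x ∂ν + p Set.univ := by
          gcongr
          calc ∫⁻ x, f x ∂p ≤ ∫⁻ _, 1 ∂p := lintegral_mono hf1
            _ = p Set.univ := lintegral_one
      _ = p Set.univ + ∫⁻ x, f x ∂ν := add_comm _ _
  have h2 : ∫⁻ x, g x ∂ν - ∫⁻ x, g x ∂μ ≤ q Set.univ := by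
    rw [tsub_le_iff_right]
    calc ∫⁻ x, g x ∂ν ≤ ∫⁻ x, g x ∂ν + ∫⁻ x, g x ∂p := le_self_add
      _ = ∫⁻ x, g x ∂(ν + p) := (lintegral_add_measure _ _ _).symm
      _ = ∫⁻ x, g x ∂(μ + q) := by rw [key]
      _ = ∫⁻ x, g x ∂μ + ∫⁻ x, g x ∂q := lintegral_add_measure _ _ _
      _ ≤ ∫⁻ x, g x ∂μ + q Set.univ := by
          gcongr
          calc ∫⁻ x, g x ∂q ≤ ∫⁻ _, 1 ∂q := lintegral_mono hg1
            _ = q Set.univ := lintegral_one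
      _ = q Set.univ + ∫⁻ x, g x ∂μ := add_comm _ _
  calc _ ≤ p Set.univ + q Set.univ := add_le_add h1 h2
    _ = tvDist μ ν := by rw [tvDist, SignedMeasure.totalVariation, Measure.add_apply]

end Aux

lemma tvDist_compProd_le {α β : Type*} [MeasurableSpace α] [MeasurableSpace β]
    (μ ν : Measure α) [IsProbabilityMeasure μ] [IsProbabilityMeasure ν]
    (κ η : Kernel α β) [IsMarkovKernel κ] [IsMarkovKernel η] {ε : ℝ≥0∞}
    (h : ∀ x, tvDist (κ x) (η x) ≤ ε) :
    tvDist (μ ⊗ₘ κ) (ν ⊗ₘ η) ≤ tvDist μ ν + ε := by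
  have hpre : ∀ (A : Set (α × β)) (x : α), Prod.mk x ⁻¹' Aᶜ = (Prod.mk x ⁻¹' A)ᶜ :=
    fun A x => rfl
  have hmid1 : tvDist (μ ⊗ₘ κ) (μ ⊗ₘ η) ≤ ε := by
    apply tvDist_le_of
    intro A hA
    rw [Measure.compProd_apply hA, Measure.compProd_apply hA,
      Measure.compProd_apply hA.compl, Measure.compProd_apply hA.compl]
    simp_rw [hpre A]
    have mκ : Measurable fun x => κ x (Prod.mk x ⁻¹' A) :=
      Kernel.measurable_kernel_prodMk_left hA
    have mη : Measurable fun x => η x (Prod.mk x ⁻¹' A) :=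
      Kernel.measurable_kernel_prodMk_left hA
    have mκ' : Measurable fun x => κ x (Prod.mk x ⁻¹' A)ᶜ := by
      simp_rw [← hpre A]; exact Kernel.measurable_kernel_prodMk_left hA.compl
    have mη' : Measurable fun x => η x (Prod.mk x ⁻¹' A)ᶜ := by
      simp_rw [← hpre A]; exact Kernel.measurable_kernel_prodMk_left hA.compl
    calc (∫⁻ x, κ x (Prod.mk x ⁻¹' A) ∂μ - ∫⁻ x, η x (Prod.mk x ⁻¹' A) ∂μ)
          + (∫⁻ x, η x (Prod.mk x ⁻¹' A)ᶜ ∂μ - ∫⁻ x, κ x (Prod.mk x ⁻¹' A)ᶜ ∂μ)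
        ≤ ∫⁻ x, (κ x (Prod.mk x ⁻¹' A) - η x (Prod.mk x ⁻¹' A)) ∂μ
          + ∫⁻ x, (η x (Prod.mk x ⁻¹' A)ᶜ - κ x (Prod.mk x ⁻¹' A)ᶜ) ∂μ :=
          add_le_add (lintegral_sub_le _ _ mη) (lintegral_sub_le _ _ mκ')
      _ = ∫⁻ x, (κ x (Prod.mk x ⁻¹' A) - η x (Prod.mk x ⁻¹' A))
          + (η x (Prod.mk x ⁻¹' A)ᶜ - κ x (Prod.mk x ⁻¹' A)ᶜ) ∂μ :=
          (lintegral_add_left (mκ.sub mη) _).symm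
      _ ≤ ∫⁻ _, ε ∂μ := by
          refine lintegral_mono fun x => le_trans ?_ (h x)
          exact le_tvDist (κ x) (η x) (measurable_prodMk_left hA)
      _ = ε := by simp
  have hmid2 : tvDist (μ ⊗ₘ η) (ν ⊗ₘ η) ≤ tvDist μ ν := by
    apply tvDist_le_of
    intro A hA
    rw [Measure.compProd_apply hA, Measure.compProd_apply hA,
      Measure.compProd_apply hA.compl, Measure.compProd_apply hA.compl]
    simp_rw [hpre A]
    have mη : Measurable fun x => η x (Prod.mk x ⁻¹' A) :=
      Kernel.measurable_kernel_prodMk_left hA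
    have mη' : Measurable fun x => η x (Prod.mk x ⁻¹' A)ᶜ := by
      simp_rw [← hpre A]; exact Kernel.measurable_kernel_prodMk_left hA.compl
    exact lintegral_tsub_add_le μ ν mη mη' (fun x => prob_le_one) (fun x => prob_le_one)
  calc tvDist (μ ⊗ₘ κ) (ν ⊗ₘ η)
      ≤ tvDist (μ ⊗ₘ κ) (μ ⊗ₘ η) + tvDist (μ ⊗ₘ η) (ν ⊗ₘ η) := tvDist_triangle _ _ _
    _ ≤ ε + tvDist μ ν := add_le_add hmid1 hmid2
    _ = tvDist μ ν + ε := add_comm _ _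

/-- Telescoping total variation bound for trajectory measures: if the
step-`i` kernels `κ i` and `η i` are within `ε i` of each other in total
variation, uniformly over histories, then the trajectory measures
`μ ⊗ κ₀ ⊗ ⋯ ⊗ κ_{n-1}` and `μ ⊗ η₀ ⊗ ⋯ ⊗ η_{n-1}` are within `Σ_{i<n} ε i`
in total variation. -/
theorem tvDist_traj_le {X : ℕ → Type*} [∀ i, MeasurableSpace (X i)]
    (μ : Measure (X 0)) [IsProbabilityMeasure μ]
    (κ η : ∀ i, Kernel (Hist X i) (X (i + 1)))
    [∀ i, IsMarkovKernel (κ i)] [∀ i, IsMarkovKernel (η i)]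
    (n : ℕ) (ε : ℕ → ℝ≥0∞)
    (hstep : ∀ i < n, ∀ h : Hist X i, tvDist ((κ i) h) ((η i) h) ≤ ε i) :
    tvDist (traj μ κ n) (traj μ η n) ≤ ∑ i ∈ Finset.range n, ε i := by
    induction n with
  | zero =>
      simp only [Finset.range_zero, Finset.sum_empty]
      exact le_of_eq (tvDist_self μ)
  | succ n ih =>
      haveI := traj.instIsProbabilityMeasure μ κ n
      haveI := traj.instIsProbabilityMeasure μ η n
      have hε : ∀ h : Hist X n, tvDist ((κ n) h) ((η n) h) ≤ ε n :=
        fun h => hstep n (Nat.lt_succ_self n) h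
      calc tvDist (traj μ κ (n + 1)) (traj μ η (n + 1))
          = tvDist ((traj μ κ n) ⊗ₘ (κ n)) ((traj μ η n) ⊗ₘ (η n)) := rfl
        _ ≤ tvDist (traj μ κ n) (traj μ η n) + ε n :=
            tvDist_compProd_le _ _ _ _ hε
        _ ≤ (∑ i ∈ Finset.range n, ε i) + ε n := by
            gcongr
            exact ih (fun i hi h => hstep i (hi.trans (Nat.lt_succ_self n)) h)
        _ = ∑ i ∈ Finset.range (n + 1), ε i := (Finset.sum_range_succ ε n).symm
end

section
/- Let X₀, X₁, …, X_n be standard Borel spaces, let μ be a probability measure on X₀, and for each i ∈ {1, …, n} let κ_i and η_i be Markov kernels from X₀ × ⋯ × X_{i−1} to X_i such that η_i(h) ≪ κ_i(h) for every history h (for μ-⊗κ-almost every history suffices). Let P_κ = μ ⊗ κ₁ ⊗ ⋯ ⊗ κ_n and P_η = μ ⊗ η₁ ⊗ ⋯ ⊗ η_n be the trajectory measures on X₀ × ⋯ × X_n. Then P_η ≪ P_κ and the Radon–Nikodym derivative factorizes as dP_η/dP_κ(x₀, …, x_n) = ∏_{i=1}^n [d η_i(x₀,…,x_{i−1}) /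 d κ_i(x₀,…,x_{i−1})](x_i) for P_κ-almost every trajectory; consequently, for every bounded measurable ν on X₀ × ⋯ × X_n, ∫ ν dP_η = ∫ ν · ∏_{i=1}^n w_i dP_κ where w_i is the i-th stepwise kernel Radon–Nikodym derivative. (This is the finite-partition inverse probability weighting formula: the IPW process Q_G equals the running product of stepwise Radon–Nikodym derivatives dG/dP of the regime's treatment kernels against the observed treatment kernels.) -/
open MeasureTheory ProbabilityTheory
open scoped ENNReal

/-- The running product of stepwise kernel Radon–Nikodym derivatives
`∏_{i<n} [dη_i(x₀,…,x_{i-1}) / dκ_i(x₀,…,x_{i-1})](x_i)` along a trajectory. -/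
noncomputable def stepwiseRNProd {X : ℕ → Type*} [∀ i, MeasurableSpace (X i)]
    [∀ i, StandardBorelSpace (X i)]
    (κ η : ∀ i, Kernel (Hist X i) (X (i + 1))) : ∀ n, Hist X n → ℝ≥0∞
  | 0, _ => 1
  | n + 1, h => stepwiseRNProd κ η n h.1 * Kernel.rnDeriv (η n) (κ n) h.1 h.2

lemma measurable_stepwiseRNProd {X : ℕ → Type*} [∀ i, MeasurableSpace (X i)]
    [∀ i, StandardBorelSpace (X i)]
    (κ η : ∀ i, Kernel (Hist X i) (X (i + 1))) :
    ∀ n, Measurable (stepwiseRNProd κ η n)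
  | 0 => measurable_const
  | n + 1 => ((measurable_stepwiseRNProd κ η n).comp measurable_fst).mul
      (Kernel.measurable_rnDeriv (η n) (κ n))

lemma traj_eq_withDensity {X : ℕ → Type*} [∀ i, MeasurableSpace (X i)]
    [∀ i, StandardBorelSpace (X i)] [∀ i, Nonempty (X i)]
    (μ : Measure (X 0)) [IsProbabilityMeasure μ]
    (κ η : ∀ i, Kernel (Hist X i) (X (i + 1)))
    [∀ i, IsMarkovKernel (κ i)] [∀ i, IsMarkovKernel (η i)] :
    ∀ n, (∀ i < n, ∀ h : Hist X i, (η i) h ≪ (κ i) h) →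
      traj μ η n = (traj μ κ n).withDensity (stepwiseRNProd κ η n)
  | 0, _ => by
      simp only [traj]
      exact withDensity_one.symm
  | n + 1, hac => by
      have IH := traj_eq_withDensity μ κ η n (fun i hi => hac i (hi.trans (Nat.lt_succ_self n)))
      haveI := traj.instIsProbabilityMeasure μ κ n
      haveI := traj.instIsProbabilityMeasure μ η n
      have hW : Measurable (stepwiseRNProd κ η n) := measurable_stepwiseRNProd κ η n
      have hg : Measurable (fun p : Hist X n × X (n + 1) =>
          Kernel.rnDeriv (η n) (κ n) p.1 p.2) := Kernel.measurable_rnDeriv (η n) (κ n)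
      ext s hs
      have hstep : ∀ h : Hist X n, (η n) h (Prod.mk h ⁻¹' s)
          = ∫⁻ y in Prod.mk h ⁻¹' s, Kernel.rnDeriv (η n) (κ n) h y ∂(κ n) h := by
        intro h
        conv_lhs => rw [← Kernel.withDensity_rnDeriv_eq (hac n (Nat.lt_succ_self n) h)]
        rw [Kernel.withDensity_apply _ hg,
          withDensity_apply _ (measurable_prodMk_left hs)]
      calc traj μ η (n + 1) s
          = ∫⁻ h, (η n) h (Prod.mk h ⁻¹' s) ∂(traj μ η n) := Measure.compProd_apply hs
        _ = ∫⁻ h, stepwiseRNProd κ η n h * (η n) h (Prod.mk h ⁻¹' s)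
              ∂(traj μ κ n) := by
            rw [IH, lintegral_withDensity_eq_lintegral_mul _ hW
              (Kernel.measurable_kernel_prodMk_left hs)]
            simp only [Pi.mul_apply]
        _ = ∫⁻ h, ∫⁻ y in Prod.mk h ⁻¹' s,
              stepwiseRNProd κ η n h * Kernel.rnDeriv (η n) (κ n) h y ∂(κ n) h
              ∂(traj μ κ n) := by
            refine lintegral_congr fun h => ?_
            rw [hstep h,
              lintegral_const_mul _ (Kernel.measurable_rnDeriv_right (η n) (κ n) h)]
        _ = ∫⁻ h, ∫⁻ y, s.indicator (stepwiseRNProd κ η (n + 1)) (h, y) ∂(κ n) h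
              ∂(traj μ κ n) := by
            refine lintegral_congr fun h => ?_
            rw [← lintegral_indicator (measurable_prodMk_left hs)]
            refine lintegral_congr fun y => ?_
            by_cases hy : (h, y) ∈ s
            · rw [Set.indicator_of_mem (show y ∈ Prod.mk h ⁻¹' s from hy)]
              exact (Set.indicator_of_mem hy (stepwiseRNProd κ η (n + 1))).symm
            · rw [Set.indicator_of_notMem (show y ∉ Prod.mk h ⁻¹' s from hy)]
              exact (Set.indicator_of_notMem hy _).symm
        _ = ∫⁻ p, s.indicator (stepwiseRNProd κ η (n + 1)) p
              ∂((traj μ κ n) ⊗ₘ (κ n)) :=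
            (Measure.lintegral_compProd
              ((measurable_stepwiseRNProd κ η (n + 1)).indicator hs)).symm
        _ = ((traj μ κ (n + 1)).withDensity (stepwiseRNProd κ η (n + 1))) s := by
            rw [withDensity_apply _ hs, ← lintegral_indicator hs]
            rfl

/-- Finite-partition inverse probability weighting formula: if the stepwise
kernels satisfy `η i (h) ≪ κ i (h)` for every history, then the trajectory
measure `P_η` is absolutely continuous with respect to `P_κ`, its
Radon–Nikodym derivative factorizes `P_κ`-a.e. as the product of the stepwise
kernel Radon–Nikodym derivatives, and consequently every bounded measurable
`ν` satisfies `∫ ν dP_η = ∫ ν · ∏ᵢ wᵢ dP_κ`. -/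
theorem traj_absolutelyContinuous_rnDeriv_prod {X : ℕ → Type*}
    [∀ i, MeasurableSpace (X i)] [∀ i, StandardBorelSpace (X i)] [∀ i, Nonempty (X i)]
    (μ : Measure (X 0)) [IsProbabilityMeasure μ]
    (κ η : ∀ i, Kernel (Hist X i) (X (i + 1)))
    [∀ i, IsMarkovKernel (κ i)] [∀ i, IsMarkovKernel (η i)]
    (n : ℕ) (hac : ∀ i < n, ∀ h : Hist X i, (η i) h ≪ (κ i) h) :
    traj μ η n ≪ traj μ κ n ∧
      (traj μ η n).rnDeriv (traj μ κ n) =ᵐ[traj μ κ n] stepwiseRNProd κ η n ∧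
      ∀ (ν : Hist X n → ℝ), Measurable ν → ∀ C : ℝ, (∀ h, |ν h| ≤ C) →
        ∫ h, ν h ∂(traj μ η n)
          = ∫ h, ν h * (stepwiseRNProd κ η n h).toReal ∂(traj μ κ n) := by
  have hkey := traj_eq_withDensity μ κ η n hac
  haveI := traj.instIsProbabilityMeasure μ κ n
  haveI := traj.instIsProbabilityMeasure μ η n
  have hW : Measurable (stepwiseRNProd κ η n) := measurable_stepwiseRNProd κ η n
  have hACmeas : traj μ η n ≪ traj μ κ n := by
    rw [hkey]; exact withDensity_absolutelyContinuous _ _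
  have hRN : (traj μ η n).rnDeriv (traj μ κ n) =ᵐ[traj μ κ n] stepwiseRNProd κ η n := by
    rw [hkey]; exact Measure.rnDeriv_withDensity _ hW
  refine ⟨hACmeas, hRN, fun ν hν C hC => ?_⟩
  rw [← integral_rnDeriv_smul hACmeas]
  refine integral_congr_ae ?_
  filter_upwards [hRN] with h hh
  rw [hh, smul_eq_mul, mul_comm]
end

section
/- (Finite-partition identification of the g-computation process.) In the interlaced-filtration setup, define for adapted processes H = (H_k)_{k=0}^K and Q = (Q_k)_{k=0}^K the estimating function Ξ_gcomp(H, Q) = Q_K (ν − H_K) + Σ_{j=0}^{K−1} Q_j (E_{P'}[H_{j+1} | 𝓗_j] − H_j), and let H*_k = E_{P'}[ν | 𝓖_k] be the g-computation process. Then: (i) for every bounded adapted process Q, E_P[Ξ_gcomp(H*, Q)] = 0; and (ii) conversely, if a bounded adapted process H satisfies E_P[Ξ_gcomp(H, Q)] = 0 for every bounded adapted process Q, then H_k = E_{P'}[ν | 𝓖_k] almost surely for every k = 0, …, K. -/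
open MeasureTheory
open scoped ENNReal MeasureTheory

variable {Ω : Type*}

/-- A process `(H_k)` is adapted to the filtration `(𝓖_k)` if `H_k` is
`𝓖_k`-measurable for each `k`. -/
def IsAdapted (G : ℕ → MeasurableSpace Ω) (H : ℕ → Ω → ℝ) : Prop :=
  ∀ k, Measurable[G k] (H k)

/-- A process `(H_k)` is (uniformly) bounded. -/
def IsBddProc (H : ℕ → Ω → ℝ) : Prop :=
  ∃ C : ℝ, ∀ k ω, |H k ω| ≤ C

/-- The finite-partition g-computation estimating function
`Ξ_gcomp(H, Q) = Q_K (ν − H_K) + Σ_{j=0}^{K−1} Q_j (E_{P'}[H_{j+1} | 𝓗_j] − H_j)`. -/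
noncomputable def XiGcomp {mΩ : MeasurableSpace Ω} (P' : Measure Ω) (K : ℕ)
    (Hf : ℕ → MeasurableSpace Ω) (ν : Ω → ℝ) (H Q : ℕ → Ω → ℝ) (ω : Ω) : ℝ :=
  Q K ω * (ν ω - H K ω)
    + ∑ j ∈ Finset.range K, Q j ω * ((P'[H (j + 1)|Hf j]) ω - H j ω)

/-- Bounded a.e.-strongly-measurable functions are integrable on finite measure spaces. -/
lemma GcompAux.integrable_of_bdd {mΩ : MeasurableSpace Ω} {P : Measure Ω} [IsFiniteMeasure P]
    {f : Ω → ℝ} (hf : AEStronglyMeasurable f P) {C : ℝ} (hC : ∀ᵐ ω ∂P, |f ω| ≤ C) :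
    Integrable f P :=
  (integrable_const C).mono' hf (hC.mono fun ω h => by simpa [Real.norm_eq_abs] using h)

/-- Pull-out lemma: integrating a bounded `m`-measurable `q` against `g` is the same as
against `P[g|m]`. -/
lemma GcompAux.integral_mul_condexp {mΩ : MeasurableSpace Ω} (P : Measure Ω)
    [IsProbabilityMeasure P] {m : MeasurableSpace Ω} (hm : m ≤ mΩ)
    {q g : Ω → ℝ} (hqm : Measurable[m] q) {Cq : ℝ} (hqb : ∀ ω, |q ω| ≤ Cq)
    (hgi : Integrable g P) :
    ∫ ω, q ω * g ω ∂P = ∫ ω, q ω * (P[g|m]) ω ∂P := by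
  have hqg : Integrable (fun ω => q ω * g ω) P :=
    hgi.bdd_mul ((hqm.mono hm le_rfl).aestronglyMeasurable)
      (c := Cq) (Filter.Eventually.of_forall fun ω => by simpa [Real.norm_eq_abs] using hqb ω)
  have h1 : ∫ ω, (P[(fun ω => q ω * g ω)|m]) ω ∂P = ∫ ω, q ω * g ω ∂P :=
    integral_condExp hm
  have h2 : P[(fun ω => q ω * g ω)|m] =ᵐ[P] fun ω => q ω * (P[g|m]) ω :=
    condExp_mul_of_stronglyMeasurable_left (hqm.stronglyMeasurable) hqg hgi
  rw [← h1]
  exact integral_congr_ae h2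

/-- If all bounded `m`-measurable test integrals of `g` vanish, then `g = 0` a.e. -/
lemma GcompAux.ae_zero_of_tests {mΩ : MeasurableSpace Ω} {P : Measure Ω}
    {m : MeasurableSpace Ω} {g : Ω → ℝ}
    (hgm : Measurable[m] g) (hgi : Integrable g P)
    (h : ∀ q : Ω → ℝ, Measurable[m] q → (∀ ω, |q ω| ≤ 1) → ∫ ω, q ω * g ω ∂P = 0) :
    g =ᵐ[P] 0 := by
  set q : Ω → ℝ := fun ω => if 0 ≤ g ω then 1 else -1 with hq
  have hqm : Measurable[m] q :=
    Measurable.ite (measurableSet_le measurable_const hgm) measurable_const measurable_const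
  have hqb : ∀ ω, |q ω| ≤ 1 := by
    intro ω; by_cases h0 : 0 ≤ g ω <;> simp [hq, h0]
  have hqg : ∀ ω, q ω * g ω = |g ω| := by
    intro ω
    by_cases h0 : 0 ≤ g ω
    · simp [hq, h0, abs_of_nonneg h0]
    · simp [hq, h0, abs_of_neg (lt_of_not_ge h0)]
  have h0 : ∫ ω, |g ω| ∂P = 0 := by
    simp_rw [← hqg]; exact h q hqm hqb
  have habs : (fun ω => |g ω|) =ᵐ[P] 0 :=
    (integral_eq_zero_iff_of_nonneg (fun ω => abs_nonneg _) hgi.abs).mp h0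
  filter_upwards [habs] with ω hω
  exact abs_eq_zero.mp hω

/-- Finite-partition identification of the g-computation process. In the
interlaced-filtration setup (`𝓖₀ ⊆ 𝓗₀ ⊆ 𝓖₁ ⊆ ⋯ ⊆ 𝓗_{K−1} ⊆ 𝓖_K`, `P` and `P'`
equivalent, sharing the covariate transitions `E_P[·|𝓖_j] = E_{P'}[·|𝓖_j]` on
bounded `𝓗_j`-measurable functions), the g-computation process
`H*_k = E_{P'}[ν | 𝓖_k]` makes `E_P[Ξ_gcomp(H*, Q)] = 0` for every bounded
adapted `Q`; conversely, any bounded adapted `H` annihilating `Ξ_gcomp(H, Q)`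
in `P`-mean against all bounded adapted `Q` equals `H*` almost surely. -/
theorem gcomputation_process_identification {mΩ : MeasurableSpace Ω}
    (P P' : Measure Ω) [IsProbabilityMeasure P] [IsProbabilityMeasure P']
    (hP'P : P' ≪ P) (hPP' : P ≪ P')
    (K : ℕ) (G Hf : ℕ → MeasurableSpace Ω)
    (hGH : ∀ k, G k ≤ Hf k) (hHG : ∀ k, Hf k ≤ G (k + 1))
    (hG : ∀ k, G k ≤ mΩ) (hHm : ∀ k, Hf k ≤ mΩ)
    (hshared : ∀ j < K, ∀ f : Ω → ℝ, Measurable[Hf j] f → (∃ C, ∀ ω, |f ω| ≤ C) →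
      P[f|G j] =ᵐ[P] P'[f|G j])
    (ν : Ω → ℝ) (hν : Measurable[G K] ν) (Cν : ℝ) (hνC : ∀ ω, |ν ω| ≤ Cν) :
    (∀ Q : ℕ → Ω → ℝ, IsAdapted G Q → IsBddProc Q →
      ∫ ω, XiGcomp P' K Hf ν (fun k => P'[ν|G k]) Q ω ∂P = 0) ∧
    (∀ H : ℕ → Ω → ℝ, IsAdapted G H → IsBddProc H →
      (∀ Q : ℕ → Ω → ℝ, IsAdapted G Q → IsBddProc Q →
        ∫ ω, XiGcomp P' K Hf ν H Q ω ∂P = 0) →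
      ∀ k ≤ K, H k =ᵐ[P] P'[ν|G k]) := by
  classical
  have hC0 : (0:ℝ) ≤ max Cν 0 := le_max_right _ _
  have hνm : Measurable ν := hν.mono (hG K) le_rfl
  have hνb' : ∀ ω, |ν ω| ≤ max Cν 0 := fun ω => (hνC ω).trans (le_max_left _ _)
  have hνintP' : Integrable ν P' :=
    GcompAux.integrable_of_bdd hνm.aestronglyMeasurable (Filter.Eventually.of_forall hνC)
  have hνintP : Integrable ν P :=
    GcompAux.integrable_of_bdd hνm.aestronglyMeasurable (Filter.Eventually.of_forall hνC)
  -- a.e. bound for conditional expectations of ν under P'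
  have hbd' : ∀ m : MeasurableSpace Ω, ∀ᵐ ω ∂P', |(P'[ν|m]) ω| ≤ max Cν 0 := by
    intro m
    have := ae_bdd_condExp_of_ae_bdd (m := m) (μ := P') (R := ⟨max Cν 0, hC0⟩) (f := ν)
      (Filter.Eventually.of_forall hνb')
    exact this
  have hbdP : ∀ m : MeasurableSpace Ω, ∀ᵐ ω ∂P, |(P'[ν|m]) ω| ≤ max Cν 0 :=
    fun m => hPP'.ae_le (hbd' m)
  have hintP : ∀ m : MeasurableSpace Ω, m ≤ mΩ → Integrable (P'[ν|m]) P := fun m hm =>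
    GcompAux.integrable_of_bdd ((stronglyMeasurable_condExp.mono hm).aestronglyMeasurable)
      (hbdP m)
  have hKeq : (P'[ν|G K]) = ν :=
    condExp_of_stronglyMeasurable (hG K) hν.stronglyMeasurable hνintP'
  -- key orthogonality: bounded G j-measurable tests kill P'[ν|Hf j] - P'[ν|G j] in P-mean
  have hkey : ∀ j, j < K → ∀ q : Ω → ℝ, Measurable[G j] q → ∀ Cq : ℝ, (∀ ω, |q ω| ≤ Cq) →
      ∫ ω, q ω * ((P'[ν|Hf j]) ω - (P'[ν|G j]) ω) ∂P = 0 := by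
    intro j hj q hqm Cq hqb
    have hfm : Measurable[Hf j] (P'[ν|Hf j]) := stronglyMeasurable_condExp.measurable
    set ft : Ω → ℝ := fun ω => max (min ((P'[ν|Hf j]) ω) (max Cν 0)) (-(max Cν 0)) with hftdef
    have hftm : Measurable[Hf j] ft := (hfm.min measurable_const).max measurable_const
    have hftb : ∀ ω, |ft ω| ≤ max Cν 0 := fun ω =>
      abs_le.2 ⟨le_max_right _ _, max_le (min_le_right _ _) (neg_le_self hC0)⟩
    have hfteq' : ft =ᵐ[P'] P'[ν|Hf j] := by
      filter_upwards [hbd' (Hf j)] with ω hω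
      have h1 := (abs_le.1 hω).1
      have h2 := (abs_le.1 hω).2
      simp only [hftdef]
      rw [min_eq_left h2, max_eq_left h1]
    have hfteq : ft =ᵐ[P] P'[ν|Hf j] := hPP'.ae_le hfteq'
    have hmain : P[(P'[ν|Hf j])|G j] =ᵐ[P] P'[ν|G j] := by
      have e1 : P[(P'[ν|Hf j])|G j] =ᵐ[P] P[ft|G j] := condExp_congr_ae hfteq.symm
      have e2 : P[ft|G j] =ᵐ[P] P'[ft|G j] := hshared j hj ft hftm ⟨max Cν 0, hftb⟩
      have e3 : P'[ft|G j] =ᵐ[P'] P'[(P'[ν|Hf j])|G j] := condExp_congr_ae hfteq'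
      have e4 : P'[(P'[ν|Hf j])|G j] =ᵐ[P'] P'[ν|G j] :=
        condExp_condExp_of_le (hGH j) (hHm j)
      have e3' : P'[ft|G j] =ᵐ[P] P'[(P'[ν|Hf j])|G j] := hPP'.ae_le e3
      have e4' : P'[(P'[ν|Hf j])|G j] =ᵐ[P] P'[ν|G j] := hPP'.ae_le e4
      exact e1.trans (e2.trans (e3'.trans e4'))
    have hfint : Integrable (P'[ν|Hf j]) P := hintP (Hf j) (hHm j)
    have hgint : Integrable (P'[ν|G j]) P := hintP (G j) (hG j)
    have hdiff : Integrable (fun ω => (P'[ν|Hf j]) ω - (P'[ν|G j]) ω) P := hfint.sub hgint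
    have hpull : ∫ ω, q ω * ((P'[ν|Hf j]) ω - (P'[ν|G j]) ω) ∂P
        = ∫ ω, q ω * (P[(fun ω => (P'[ν|Hf j]) ω - (P'[ν|G j]) ω)|G j]) ω ∂P :=
      GcompAux.integral_mul_condexp P (hG j) hqm hqb hdiff
    rw [hpull]
    have e5 : P[(fun ω => (P'[ν|Hf j]) ω - (P'[ν|G j]) ω)|G j]
        =ᵐ[P] fun ω => (P[(P'[ν|Hf j])|G j]) ω - (P[(P'[ν|G j])|G j]) ω :=
      condExp_sub hfint hgint (G j)
    have e6 : P[(P'[ν|G j])|G j] = P'[ν|G j] :=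
      condExp_of_stronglyMeasurable (hG j) stronglyMeasurable_condExp hgint
    have hcz : P[(fun ω => (P'[ν|Hf j]) ω - (P'[ν|G j]) ω)|G j] =ᵐ[P] 0 := by
      filter_upwards [e5, hmain] with ω h5 hm'
      rw [h5, e6]
      simp [hm']
    calc ∫ ω, q ω * (P[(fun ω => (P'[ν|Hf j]) ω - (P'[ν|G j]) ω)|G j]) ω ∂P
        = ∫ ω, (0:ℝ) ∂P := by
          refine integral_congr_ae ?_
          filter_upwards [hcz] with ω h
          rw [h]; simp
      _ = 0 := by simp
  -- tower property transferred to P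
  have htower : ∀ j : ℕ, (P'[(P'[ν|G (j+1)])|Hf j]) =ᵐ[P] (P'[ν|Hf j]) :=
    fun j => hPP'.ae_le (condExp_condExp_of_le (hHG j) (hG (j+1)))
  constructor
  · -- part (i)
    intro Q hQa hQb
    obtain ⟨CQ, hCQ⟩ := hQb
    have hxi : ∀ ω, XiGcomp P' K Hf ν (fun k => P'[ν|G k]) Q ω
        = ∑ j ∈ Finset.range K, Q j ω * ((P'[(P'[ν|G (j+1)])|Hf j]) ω - (P'[ν|G j]) ω) := by
      intro ω
      simp only [XiGcomp, hKeq, sub_self, mul_zero, zero_add]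
    have heq2 : (fun ω => XiGcomp P' K Hf ν (fun k => P'[ν|G k]) Q ω)
        =ᵐ[P] fun ω => ∑ j ∈ Finset.range K, Q j ω * ((P'[ν|Hf j]) ω - (P'[ν|G j]) ω) := by
      have hall : ∀ᵐ ω ∂P, ∀ j : ℕ, (P'[(P'[ν|G (j+1)])|Hf j]) ω = (P'[ν|Hf j]) ω :=
        ae_all_iff.2 fun j => htower j
      filter_upwards [hall] with ω hω
      rw [hxi ω]
      exact Finset.sum_congr rfl fun j _ => by rw [hω j]
    have hints : ∀ j ∈ Finset.range K,
        Integrable (fun ω => Q j ω * ((P'[ν|Hf j]) ω - (P'[ν|G j]) ω)) P := fun j _ =>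
      ((hintP (Hf j) (hHm j)).sub (hintP (G j) (hG j))).bdd_mul
        (((hQa j).mono (hG j) le_rfl).aestronglyMeasurable)
        (c := CQ) (Filter.Eventually.of_forall fun ω => by simpa [Real.norm_eq_abs] using hCQ j ω)
    rw [integral_congr_ae heq2, integral_finset_sum _ hints]
    exact Finset.sum_eq_zero fun j hj =>
      hkey j (Finset.mem_range.mp hj) (Q j) (hQa j) CQ (hCQ j)
  · -- part (ii)
    intro H hHa hHb hzero
    obtain ⟨CH, hCH⟩ := hHb
    have hHint : ∀ k, Integrable (H k) P := fun k =>
      GcompAux.integrable_of_bdd ((hHa k).mono (hG k) le_rfl).aestronglyMeasurable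
        (Filter.Eventually.of_forall (hCH k))
    -- testing against a process supported at a single index
    have hTest : ∀ k, ∀ q : Ω → ℝ, Measurable[G k] q → (∀ ω, |q ω| ≤ 1) →
        ∫ ω, XiGcomp P' K Hf ν H (fun j ω' => if j = k then q ω' else 0) ω ∂P = 0 := by
      intro k q hqm hqb
      refine hzero _ (fun j => ?_) ⟨1, fun j ω => ?_⟩
      · by_cases h : j = k
        · subst h; simpa using hqm
        · simp only [if_neg h]; exact measurable_const
      · by_cases h : j = k
        · simpa [h] using hqb ω
        · simp [h]
    -- base case: k = K
    have hbase : H K =ᵐ[P] P'[ν|G K] := by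
      have htests : ∀ q : Ω → ℝ, Measurable[G K] q → (∀ ω, |q ω| ≤ 1) →
          ∫ ω, q ω * (ν ω - H K ω) ∂P = 0 := by
        intro q hqm hqb
        have h1 := hTest K q hqm hqb
        have h2 : ∀ ω, XiGcomp P' K Hf ν H (fun j ω' => if j = K then q ω' else 0) ω
            = q ω * (ν ω - H K ω) := by
          intro ω
          have hz : ∀ j ∈ Finset.range K,
              (if j = K then q ω else 0) * ((P'[H (j+1)|Hf j]) ω - H j ω) = 0 := fun j hj => by
            rw [if_neg (Finset.mem_range.mp hj).ne, zero_mul]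
          simp only [XiGcomp]
          rw [Finset.sum_eq_zero hz, add_zero]
          simp
        rw [← h1]
        exact integral_congr_ae (Filter.Eventually.of_forall fun ω => (h2 ω).symm)
      have h0 : (fun ω => ν ω - H K ω) =ᵐ[P] 0 :=
        GcompAux.ae_zero_of_tests (hν.sub (hHa K)) (hνintP.sub (hHint K)) htests
      rw [hKeq]
      filter_upwards [h0] with ω hω
      have hzz : ν ω - H K ω = 0 := hω
      linarith
    -- inductive step: k < K
    have hstep : ∀ k, k < K → H (k+1) =ᵐ[P] P'[ν|G (k+1)] → H k =ᵐ[P] P'[ν|G k] := by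
      intro k hk ih
      have ih' : H (k+1) =ᵐ[P'] P'[ν|G (k+1)] := hP'P.ae_le ih
      have e1 : (P'[H (k+1)|Hf k]) =ᵐ[P] (P'[ν|Hf k]) :=
        hPP'.ae_le ((condExp_congr_ae ih').trans (condExp_condExp_of_le (hHG k) (hG (k+1))))
      have htests : ∀ q : Ω → ℝ, Measurable[G k] q → (∀ ω, |q ω| ≤ 1) →
          ∫ ω, q ω * ((P'[ν|G k]) ω - H k ω) ∂P = 0 := by
        intro q hqm hqb
        have h1 := hTest k q hqm hqb
        have h2 : ∀ ω, XiGcomp P' K Hf ν H (fun j ω' => if j = k then q ω' else 0) ω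
            = q ω * ((P'[H (k+1)|Hf k]) ω - H k ω) := by
          intro ω
          simp only [XiGcomp]
          rw [if_neg hk.ne', zero_mul, zero_add,
            Finset.sum_eq_single_of_mem k (Finset.mem_range.mpr hk)
              (fun j _ hne => by rw [if_neg hne, zero_mul]), if_pos rfl]
        have h3 : ∫ ω, q ω * ((P'[H (k+1)|Hf k]) ω - H k ω) ∂P = 0 := by
          rw [← h1]
          exact integral_congr_ae (Filter.Eventually.of_forall fun ω => (h2 ω).symm)
        have h4 : ∫ ω, q ω * ((P'[ν|Hf k]) ω - H k ω) ∂P = 0 := by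
          rw [← h3]
          refine integral_congr_ae ?_
          filter_upwards [e1] with ω hω
          rw [hω]
        have h5 := hkey k hk q hqm 1 hqb
        have hint1 : Integrable (fun ω => q ω * ((P'[ν|Hf k]) ω - H k ω)) P :=
          ((hintP (Hf k) (hHm k)).sub (hHint k)).bdd_mul
            (((hqm.mono (hG k) le_rfl)).aestronglyMeasurable)
            (c := 1) (Filter.Eventually.of_forall fun ω => by simpa [Real.norm_eq_abs] using hqb ω)
        have hint2 : Integrable (fun ω => q ω * ((P'[ν|Hf k]) ω - (P'[ν|G k]) ω)) P :=
          ((hintP (Hf k) (hHm k)).sub (hintP (G k) (hG k))).bdd_mul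
            (((hqm.mono (hG k) le_rfl)).aestronglyMeasurable)
            (c := 1) (Filter.Eventually.of_forall fun ω => by simpa [Real.norm_eq_abs] using hqb ω)
        have hsub : ∫ ω, (q ω * ((P'[ν|Hf k]) ω - H k ω)
            - q ω * ((P'[ν|Hf k]) ω - (P'[ν|G k]) ω)) ∂P = 0 := by
          rw [integral_sub hint1 hint2, h4, h5, sub_zero]
        rw [← hsub]
        refine integral_congr_ae (Filter.Eventually.of_forall fun ω => ?_)
        ring
      have h0 : (fun ω => (P'[ν|G k]) ω - H k ω) =ᵐ[P] 0 :=
        GcompAux.ae_zero_of_tests (stronglyMeasurable_condExp.measurable.sub (hHa k))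
          ((hintP (G k) (hG k)).sub (hHint k)) htests
      filter_upwards [h0] with ω hω
      have hzz : (P'[ν|G k]) ω - H k ω = 0 := hω
      linarith
    have main : ∀ d k, k + d = K → H k =ᵐ[P] P'[ν|G k] := by
      intro d
      induction d with
      | zero =>
        intro k hk
        obtain rfl : k = K := by omega
        exact hbase
      | succ d ihd =>
        intro k hk
        exact hstep k (by omega) (ihd (k+1) (by omega))
    intro k hkK
    exact main (K - k) k (by omega)
end

section
/- (Finite-partition identification of the inverse probability weighting process.) In the interlaced-filtration setup, define for adapted processes H = (H_k)_{k=0}^K and Q = (Q_k)_{k=0}^K the estimating function Ξ_IPW(H, Q) = (Q₀ H₀ − E_{P'}[H₀]) + Σ_{j=1}^{K} (Q_j H_j − Q_{j−1} E_{P'}[H_j | 𝓗_{j−1}]), and let Q*_k = E_P[Z | 𝓖_k] be the inverse probability weighting process. Then: (i) for every bounded adapted process H, E_P[Ξ_IPW(H, Q*)] = 0; and (ii) conversely, if a bounded adapted process Q satisfies E_P[Ξ_IPW(H, Q)] = 0 for every bounded adapted process H, then Q_k = E_P[Z | 𝓖_k] almost surely for every k = 0, …, K. -/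
open MeasureTheory
open scoped ENNReal MeasureTheory

variable {Ω : Type*}

/-- The finite-partition inverse probability weighting estimating function
`Ξ_IPW(H, Q) = (Q₀ H₀ − E_{P'}[H₀]) + Σ_{j=1}^{K} (Q_j H_j − Q_{j−1} E_{P'}[H_j | 𝓗_{j−1}])`. -/
noncomputable def XiIPW {mΩ : MeasurableSpace Ω} (P' : Measure Ω) (K : ℕ)
    (Hf : ℕ → MeasurableSpace Ω) (H Q : ℕ → Ω → ℝ) (ω : Ω) : ℝ :=
  (Q 0 ω * H 0 ω - ∫ ω', H 0 ω' ∂P')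
    + ∑ j ∈ Finset.range K,
        (Q (j + 1) ω * H (j + 1) ω - Q j ω * (P'[H (j + 1)|Hf j]) ω)

/-- Bounded a.e. strongly measurable functions on finite measure spaces are integrable. -/
lemma intg_of_bdd {mΩ : MeasurableSpace Ω} {μ : Measure Ω} [IsFiniteMeasure μ] {f : Ω → ℝ}
    (hf : AEStronglyMeasurable f μ) {C : ℝ} (hC : ∀ᵐ ω ∂μ, |f ω| ≤ C) :
    Integrable f μ :=
  Integrable.mono' (integrable_const C) hf (by simpa [Real.norm_eq_abs] using hC)

/-- Lemma A: `∫ E_P[Z|m] h dP = ∫ h dP'` for `m`-measurable a.e. bounded `h`. -/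
lemma lemA {mΩ : MeasurableSpace Ω} (P P' : Measure Ω)
    [IsProbabilityMeasure P] [IsProbabilityMeasure P'] (hP'P : P' ≪ P)
    {m : MeasurableSpace Ω} (hm : m ≤ mΩ) {h : Ω → ℝ} (hmeas : StronglyMeasurable[m] h)
    {C : ℝ} (hbdd : ∀ᵐ ω ∂P, |h ω| ≤ C) :
    ∫ ω, (P[fun ω' => (P'.rnDeriv P ω').toReal|m]) ω * h ω ∂P = ∫ ω, h ω ∂P' := by
  set Z : Ω → ℝ := fun ω' => (P'.rnDeriv P ω').toReal with hZ
  have hZint : Integrable Z P := Measure.integrable_toReal_rnDeriv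
  have hasm : AEStronglyMeasurable[mΩ] h P := (hmeas.mono hm).aestronglyMeasurable
  have hhZ : Integrable (fun ω => h ω * Z ω) P :=
    hZint.bdd_mul hasm (by simpa [Real.norm_eq_abs] using hbdd)
  have hhZ' : Integrable (h * Z) P := hhZ
  have hpull : P[h * Z|m] =ᵐ[P] h * P[Z|m] :=
    condExp_mul_of_stronglyMeasurable_left hmeas hhZ' hZint
  calc ∫ ω, (P[Z|m]) ω * h ω ∂P = ∫ ω, (h * P[Z|m]) ω ∂P := by
        simp only [Pi.mul_apply, mul_comm]
    _ = ∫ ω, (P[h * Z|m]) ω ∂P := (integral_congr_ae hpull).symm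
    _ = ∫ ω, (h * Z) ω ∂P := integral_condExp hm
    _ = ∫ ω, Z ω • h ω ∂P := by simp only [Pi.mul_apply, smul_eq_mul, mul_comm]
    _ = ∫ ω, h ω ∂P' := integral_rnDeriv_smul hP'P

/-- Lemma B: `∫ E_P[Z|G j] g dP = ∫ g dP'` for `Hf j`-measurable pointwise-bounded `g`,
using the shared-transition assumption. -/
lemma lemB {mΩ : MeasurableSpace Ω} (P P' : Measure Ω)
    [IsProbabilityMeasure P] [IsProbabilityMeasure P'] (hP'P : P' ≪ P) (hPP' : P ≪ P')
    (K : ℕ) (G Hf : ℕ → MeasurableSpace Ω)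
    (hG : ∀ k, G k ≤ mΩ) (hHm : ∀ k, Hf k ≤ mΩ)
    (hshared : ∀ j < K, ∀ f : Ω → ℝ, Measurable[Hf j] f → (∃ C, ∀ ω, |f ω| ≤ C) →
      P[f|G j] =ᵐ[P] P'[f|G j])
    {j : ℕ} (hj : j < K) {g : Ω → ℝ} (hgm : Measurable[Hf j] g)
    {C : ℝ} (hC : ∀ ω, |g ω| ≤ C) :
    ∫ ω, (P[fun ω' => (P'.rnDeriv P ω').toReal|G j]) ω * g ω ∂P = ∫ ω, g ω ∂P' := by
  set Z : Ω → ℝ := fun ω' => (P'.rnDeriv P ω').toReal with hZ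
  set Qj : Ω → ℝ := P[Z|G j] with hQj
  have hgasm : AEStronglyMeasurable g P := (hgm.mono (hHm j) le_rfl).aestronglyMeasurable
  have hgint : Integrable g P := intg_of_bdd hgasm (Filter.Eventually.of_forall hC)
  have hQjg : Integrable (Qj * g) P := by
    have := (integrable_condExp : Integrable Qj P).bdd_mul hgasm
      (Filter.Eventually.of_forall (fun ω => by simpa [Real.norm_eq_abs] using hC ω))
    exact this.congr (Filter.Eventually.of_forall fun ω => mul_comm _ _)
  have hpull : P[Qj * g|G j] =ᵐ[P] Qj * P[g|G j] :=
    condExp_mul_of_stronglyMeasurable_left stronglyMeasurable_condExp hQjg hgint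
  have hstep1 : ∫ ω, Qj ω * g ω ∂P = ∫ ω, Qj ω * (P[g|G j]) ω ∂P := by
    calc ∫ ω, Qj ω * g ω ∂P = ∫ ω, (P[Qj * g|G j]) ω ∂P := (integral_condExp (hG j)).symm
      _ = ∫ ω, (Qj * P[g|G j]) ω ∂P := integral_congr_ae hpull
      _ = ∫ ω, Qj ω * (P[g|G j]) ω ∂P := rfl
  have hsh : P[g|G j] =ᵐ[P] P'[g|G j] := hshared j hj g hgm ⟨C, hC⟩
  have hstep2 : ∫ ω, Qj ω * (P[g|G j]) ω ∂P = ∫ ω, Qj ω * (P'[g|G j]) ω ∂P := by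
    refine integral_congr_ae ?_
    filter_upwards [hsh] with ω hω; rw [hω]
  have hCnn : 0 ≤ max C 0 := le_max_right _ _
  have hgbdd' : ∀ᵐ ω ∂P', |g ω| ≤ ((max C 0).toNNReal : ℝ) := by
    refine Filter.Eventually.of_forall fun ω => ?_
    rw [Real.coe_toNNReal _ hCnn]
    exact (hC ω).trans (le_max_left _ _)
  have hcbdd : ∀ᵐ ω ∂P', |(P'[g|G j]) ω| ≤ ((max C 0).toNNReal : ℝ) :=
    ae_bdd_condExp_of_ae_bdd hgbdd'
  have hcbddP : ∀ᵐ ω ∂P, |(P'[g|G j]) ω| ≤ ((max C 0).toNNReal : ℝ) := hPP'.ae_le hcbdd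
  have hstep3 : ∫ ω, Qj ω * (P'[g|G j]) ω ∂P = ∫ ω, (P'[g|G j]) ω ∂P' :=
    lemA P P' hP'P (hG j) stronglyMeasurable_condExp hcbddP
  rw [hstep1, hstep2, hstep3, integral_condExp (hG j)]

/-- Lemma C: `∫ E_P[Z|G j] ⋅ E_{P'}[h|Hf j] dP = ∫ h dP'` for pointwise bounded `h`. -/
lemma lemC {mΩ : MeasurableSpace Ω} (P P' : Measure Ω)
    [IsProbabilityMeasure P] [IsProbabilityMeasure P'] (hP'P : P' ≪ P) (hPP' : P ≪ P')
    (K : ℕ) (G Hf : ℕ → MeasurableSpace Ω)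
    (hG : ∀ k, G k ≤ mΩ) (hHm : ∀ k, Hf k ≤ mΩ)
    (hshared : ∀ j < K, ∀ f : Ω → ℝ, Measurable[Hf j] f → (∃ C, ∀ ω, |f ω| ≤ C) →
      P[f|G j] =ᵐ[P] P'[f|G j])
    {j : ℕ} (hj : j < K) {h : Ω → ℝ} (hmeas : AEStronglyMeasurable h P')
    {C : ℝ} (hC : ∀ ω, |h ω| ≤ C) :
    ∫ ω, (P[fun ω' => (P'.rnDeriv P ω').toReal|G j]) ω * (P'[h|Hf j]) ω ∂P
      = ∫ ω, h ω ∂P' := by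
  set g : Ω → ℝ := P'[h|Hf j] with hgdef
  set C' : ℝ := max C 0 with hC'
  have hC'nn : 0 ≤ C' := le_max_right _ _
  have hbddh : ∀ᵐ ω ∂P', |h ω| ≤ (C'.toNNReal : ℝ) := by
    refine Filter.Eventually.of_forall fun ω => ?_
    rw [Real.coe_toNNReal _ hC'nn]
    exact (hC ω).trans (le_max_left _ _)
  have hgbdd : ∀ᵐ ω ∂P', |g ω| ≤ (C'.toNNReal : ℝ) := ae_bdd_condExp_of_ae_bdd hbddh
  have hgbdd' : ∀ᵐ ω ∂P', |g ω| ≤ C' := by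
    filter_upwards [hgbdd] with ω hω
    rwa [Real.coe_toNNReal _ hC'nn] at hω
  set gT : Ω → ℝ := fun ω => max (-C') (min C' (g ω)) with hgT
  have hgTm : Measurable[Hf j] gT :=
    Measurable.max measurable_const
      (Measurable.min measurable_const (stronglyMeasurable_condExp.measurable))
  have hgTbdd : ∀ ω, |gT ω| ≤ C' := by
    intro ω
    rw [abs_le]
    exact ⟨le_max_left _ _, max_le (by linarith) (min_le_left _ _)⟩
  have hgTeq : gT =ᵐ[P'] g := by
    filter_upwards [hgbdd'] with ω hω
    rw [abs_le] at hω
    simp only [hgT]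
    rw [min_eq_right hω.2, max_eq_right hω.1]
  have hgTeqP : gT =ᵐ[P] g := hPP'.ae_le hgTeq
  have hint : Integrable h P' := intg_of_bdd hmeas (Filter.Eventually.of_forall hC)
  calc ∫ ω, (P[fun ω' => (P'.rnDeriv P ω').toReal|G j]) ω * g ω ∂P
      = ∫ ω, (P[fun ω' => (P'.rnDeriv P ω').toReal|G j]) ω * gT ω ∂P := by
        refine integral_congr_ae ?_
        filter_upwards [hgTeqP] with ω hω; rw [hω]
    _ = ∫ ω, gT ω ∂P' := lemB P P' hP'P hPP' K G Hf hG hHm hshared hj hgTm hgTbdd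
    _ = ∫ ω, g ω ∂P' := integral_congr_ae hgTeq
    _ = ∫ ω, h ω ∂P' := integral_condExp (hHm j)

/-- Finite-partition identification of the inverse probability weighting
process. In the interlaced-filtration setup (`𝓖₀ ⊆ 𝓗₀ ⊆ 𝓖₁ ⊆ ⋯ ⊆ 𝓗_{K−1} ⊆ 𝓖_K`,
`P` and `P'` equivalent, sharing the covariate transitions
`E_P[·|𝓖_j] = E_{P'}[·|𝓖_j]` on bounded `𝓗_j`-measurable functions), the IPW
process `Q*_k = E_P[dP'/dP | 𝓖_k]` makes `E_P[Ξ_IPW(H, Q*)] = 0` for every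
bounded adapted `H`; conversely, any bounded adapted `Q` annihilating
`Ξ_IPW(H, Q)` in `P`-mean against all bounded adapted `H` equals `Q*` almost
surely. -/
theorem ipw_process_identification {mΩ : MeasurableSpace Ω}
    (P P' : Measure Ω) [IsProbabilityMeasure P] [IsProbabilityMeasure P']
    (hP'P : P' ≪ P) (hPP' : P ≪ P')
    (K : ℕ) (G Hf : ℕ → MeasurableSpace Ω)
    (hGH : ∀ k, G k ≤ Hf k) (hHG : ∀ k, Hf k ≤ G (k + 1))
    (hG : ∀ k, G k ≤ mΩ) (hHm : ∀ k, Hf k ≤ mΩ)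
    (hshared : ∀ j < K, ∀ f : Ω → ℝ, Measurable[Hf j] f → (∃ C, ∀ ω, |f ω| ≤ C) →
      P[f|G j] =ᵐ[P] P'[f|G j]) :
    (∀ H : ℕ → Ω → ℝ, IsAdapted G H → IsBddProc H →
      ∫ ω, XiIPW P' K Hf H
        (fun k => P[fun ω' => (P'.rnDeriv P ω').toReal|G k]) ω ∂P = 0) ∧
    (∀ Q : ℕ → Ω → ℝ, IsAdapted G Q → IsBddProc Q →
      (∀ H : ℕ → Ω → ℝ, IsAdapted G H → IsBddProc H →
        ∫ ω, XiIPW P' K Hf H Q ω ∂P = 0) →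
      ∀ k ≤ K, Q k =ᵐ[P] P[fun ω' => (P'.rnDeriv P ω').toReal|G k]) := by
  constructor
  · -- Part (i)
    intro H hHad ⟨C, hC⟩
    set Z : Ω → ℝ := fun ω' => (P'.rnDeriv P ω').toReal with hZdef
    set Qs : ℕ → Ω → ℝ := fun k => P[Z|G k] with hQsdef
    have hasm : ∀ k, AEStronglyMeasurable (H k) P :=
      fun k => ((hHad k).mono (hG k) le_rfl).aestronglyMeasurable
    have ht1 : ∀ k, Integrable (fun ω => Qs k ω * H k ω) P := by
      intro k
      have := (integrable_condExp : Integrable (Qs k) P).bdd_mul (hasm k)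
        (Filter.Eventually.of_forall (fun ω => by simpa [Real.norm_eq_abs] using hC k ω))
      exact this.congr (Filter.Eventually.of_forall fun ω => mul_comm _ _)
    have hcb : ∀ j, ∀ᵐ ω ∂P, |(P'[H (j+1)|Hf j]) ω| ≤ ((max C 0).toNNReal : ℝ) := by
      intro j
      refine hPP'.ae_le (ae_bdd_condExp_of_ae_bdd (Filter.Eventually.of_forall fun ω => ?_))
      rw [Real.coe_toNNReal _ (le_max_right C 0)]
      exact (hC _ ω).trans (le_max_left _ _)
    have hcasm : ∀ j, AEStronglyMeasurable (P'[H (j+1)|Hf j]) P :=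
      fun j => (stronglyMeasurable_condExp.mono (hHm j)).aestronglyMeasurable
    have ht2 : ∀ j, Integrable (fun ω => Qs j ω * (P'[H (j+1)|Hf j]) ω) P := by
      intro j
      have := (integrable_condExp : Integrable (Qs j) P).bdd_mul (hcasm j)
        ((hcb j).mono fun ω hω => by rw [Real.norm_eq_abs]; exact hω)
      exact this.congr (Filter.Eventually.of_forall fun ω => mul_comm _ _)
    have hA : ∀ k, ∫ ω, Qs k ω * H k ω ∂P = ∫ ω, H k ω ∂P' := fun k =>
      lemA P P' hP'P (hG k) ((hHad k).stronglyMeasurable)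
        (Filter.Eventually.of_forall (hC k))
    have hCc : ∀ j, j < K → ∫ ω, Qs j ω * (P'[H (j+1)|Hf j]) ω ∂P = ∫ ω, H (j+1) ω ∂P' :=
      fun j hj => lemC P P' hP'P hPP' K G Hf hG hHm hshared hj
        (((hHad (j+1)).mono (hG (j+1)) le_rfl).aestronglyMeasurable) (hC (j+1))
    have h1 : ∫ ω, (Qs 0 ω * H 0 ω - ∫ ω', H 0 ω' ∂P') ∂P = 0 := by
      rw [integral_sub (ht1 0) (integrable_const _), hA 0, integral_const]
      simp
    have h2 : ∀ j ∈ Finset.range K,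
        ∫ ω, (Qs (j+1) ω * H (j+1) ω - Qs j ω * (P'[H (j+1)|Hf j]) ω) ∂P = 0 := by
      intro j hj
      rw [integral_sub (ht1 (j+1)) (ht2 j), hA (j+1), hCc j (Finset.mem_range.mp hj), sub_self]
    have hsint : ∀ j ∈ Finset.range K,
        Integrable (fun ω => Qs (j+1) ω * H (j+1) ω - Qs j ω * (P'[H (j+1)|Hf j]) ω) P :=
      fun j _ => (ht1 (j+1)).sub (ht2 j)
    have hint0 : Integrable (fun ω => Qs 0 ω * H 0 ω - ∫ ω', H 0 ω' ∂P') P :=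
      (ht1 0).sub (integrable_const _)
    have hints : Integrable (fun ω => ∑ j ∈ Finset.range K,
        (Qs (j+1) ω * H (j+1) ω - Qs j ω * (P'[H (j+1)|Hf j]) ω)) P :=
      integrable_finset_sum _ hsint
    simp only [XiIPW]
    rw [integral_add hint0 hints, integral_finset_sum _ hsint, h1,
      Finset.sum_eq_zero h2, add_zero]
  · -- Part (ii)
    intro Q hQad ⟨D, hD⟩ hQnull
    set Z : Ω → ℝ := fun ω' => (P'.rnDeriv P ω').toReal with hZdef
    have hQasm : ∀ k, AEStronglyMeasurable (Q k) P :=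
      fun k => ((hQad k).mono (hG k) le_rfl).aestronglyMeasurable
    have hQint : ∀ k, Integrable (Q k) P :=
      fun k => intg_of_bdd (hQasm k) (Filter.Eventually.of_forall (hD k))
    -- uniqueness via set integrals
    have claim : ∀ k : ℕ, (∀ h : Ω → ℝ, Measurable[G k] h → ∀ C0 : ℝ, (∀ ω, |h ω| ≤ C0) →
        ∫ ω, Q k ω * h ω ∂P = ∫ ω, h ω ∂P') → Q k =ᵐ[P] P[Z|G k] := by
      intro k hk
      refine ae_eq_condExp_of_forall_setIntegral_eq (hG k)
        Measure.integrable_toReal_rnDeriv (fun s _ _ => (hQint k).integrableOn)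
        (fun s hs _ => ?_) (StronglyMeasurable.aestronglyMeasurable
          ((hQad k).stronglyMeasurable))
      have hsm : MeasurableSet s := hG k s hs
      have hind : Measurable[G k] (s.indicator (fun _ => (1 : ℝ))) :=
        measurable_const.indicator hs
      have hb : ∀ ω, |s.indicator (fun _ => (1 : ℝ)) ω| ≤ 1 := by
        intro ω; by_cases hω : ω ∈ s <;> simp [Set.indicator_apply, hω]
      have hkey := hk _ hind 1 hb
      have hL : ∫ ω, Q k ω * s.indicator (fun _ => (1 : ℝ)) ω ∂P
          = ∫ ω in s, Q k ω ∂P := by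
        rw [← integral_indicator hsm]
        congr 1; funext ω
        by_cases hω : ω ∈ s <;> simp [Set.indicator_apply, hω]
      have hR : ∫ ω, s.indicator (fun _ => (1 : ℝ)) ω ∂P' = (P' s).toReal := by
        rw [integral_indicator_const (1 : ℝ) hsm]; simp [Measure.real]
      have hZs : ∫ ω in s, Z ω ∂P = (P' s).toReal :=
        Measure.setIntegral_toReal_rnDeriv hP'P s
      rw [hL, hR] at hkey
      rw [hkey, ← hZs]
    intro k
    induction k with
    | zero =>
      intro _
      refine claim 0 ?_
      intro h hm C0 hb
      set H : ℕ → Ω → ℝ := fun i => if i = 0 then h else 0 with hH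
      have hAd : IsAdapted G H := by
        intro i
        cases i with
        | zero => simpa [hH] using hm
        | succ n =>
          simp only [hH, if_neg (Nat.succ_ne_zero n)]
          exact measurable_const
      have hB : IsBddProc H := by
        refine ⟨max C0 0, fun i ω => ?_⟩
        by_cases hi : i = 0
        · subst hi
          have hv : H 0 ω = h ω := by simp [hH]
          rw [hv]; exact (hb ω).trans (le_max_left _ _)
        · simp [hH, hi, le_max_right C0 0]
      have h0 := hQnull H hAd hB
      have hXi : ∀ ω, XiIPW P' K Hf H Q ω = Q 0 ω * h ω - ∫ ω', h ω' ∂P' := by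
        intro ω
        have hz : ∀ i : ℕ, H (i + 1) = 0 := fun i => by
          funext ω'; simp [hH]
        simp only [XiIPW]
        rw [Finset.sum_eq_zero (fun i _ => by rw [hz i, condExp_zero]; simp)]
        simp [hH]
      simp only [hXi] at h0
      have hint : Integrable (fun ω => Q 0 ω * h ω) P := by
        have hhint : Integrable h P :=
          intg_of_bdd ((hm.mono (hG 0) le_rfl)).aestronglyMeasurable
            (Filter.Eventually.of_forall hb)
        exact hhint.bdd_mul (hQasm 0)
          (Filter.Eventually.of_forall fun ω => by
            rw [Real.norm_eq_abs]; exact hD 0 ω)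
      rw [integral_sub hint (integrable_const _), integral_const] at h0
      simp only [measure_univ, probReal_univ, ENNReal.toReal_one, one_smul] at h0
      linarith
    | succ j ih =>
      intro hkK
      have hjlt : j < K := Nat.lt_of_succ_le hkK
      have ihae := ih (Nat.le_of_succ_le hkK)
      refine claim (j + 1) ?_
      intro h hm C0 hb
      set H : ℕ → Ω → ℝ := fun i => if i = j + 1 then h else 0 with hH
      have hAd : IsAdapted G H := by
        intro i
        by_cases hi : i = j + 1
        · subst hi; simpa [hH] using hm
        · simp only [hH, if_neg hi]
          exact measurable_const
      have hB : IsBddProc H := by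
        refine ⟨max C0 0, fun i ω => ?_⟩
        by_cases hi : i = j + 1
        · subst hi
          have hv : H (j + 1) ω = h ω := by simp [hH]
          rw [hv]; exact (hb ω).trans (le_max_left _ _)
        · simp [hH, hi, le_max_right C0 0]
      have h0 := hQnull H hAd hB
      have hXi : ∀ ω, XiIPW P' K Hf H Q ω
          = Q (j + 1) ω * h ω - Q j ω * (P'[h|Hf j]) ω := by
        intro ω
        have hH0 : H 0 = 0 := by
          funext ω'; simp [hH, (Nat.succ_ne_zero j).symm]
        have hterm : ∀ i ∈ Finset.range K,
            (Q (i + 1) ω * H (i + 1) ω - Q i ω * (P'[H (i + 1)|Hf i]) ω)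
              = if i = j then Q (j + 1) ω * h ω - Q j ω * (P'[h|Hf j]) ω else 0 := by
          intro i _
          by_cases hij : i = j
          · subst hij; simp [hH]
          · have hzz : H (i + 1) = 0 := by
              funext ω'; simp [hH, hij]
            rw [hzz, condExp_zero]
            simp [hij]
        simp only [XiIPW]
        rw [Finset.sum_congr rfl hterm, Finset.sum_ite_eq' (Finset.range K) j,
          if_pos (Finset.mem_range.mpr hjlt), hH0]
        simp
      simp only [hXi] at h0
      have hhintP : Integrable h P :=
        intg_of_bdd ((hm.mono (hG (j + 1)) le_rfl)).aestronglyMeasurable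
          (Filter.Eventually.of_forall hb)
      have hint1 : Integrable (fun ω => Q (j + 1) ω * h ω) P :=
        hhintP.bdd_mul (hQasm (j + 1))
          (Filter.Eventually.of_forall fun ω => by
            rw [Real.norm_eq_abs]; exact hD (j + 1) ω)
      have hcb : ∀ᵐ ω ∂P, |(P'[h|Hf j]) ω| ≤ ((max C0 0).toNNReal : ℝ) := by
        refine hPP'.ae_le (ae_bdd_condExp_of_ae_bdd
          (Filter.Eventually.of_forall fun ω => ?_))
        rw [Real.coe_toNNReal _ (le_max_right C0 0)]
        exact (hb ω).trans (le_max_left _ _)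
      have hgasm : AEStronglyMeasurable (P'[h|Hf j]) P :=
        (stronglyMeasurable_condExp.mono (hHm j)).aestronglyMeasurable
      have hgint : Integrable (P'[h|Hf j]) P := intg_of_bdd hgasm hcb
      have hint2 : Integrable (fun ω => Q j ω * (P'[h|Hf j]) ω) P :=
        hgint.bdd_mul (hQasm j)
          (Filter.Eventually.of_forall fun ω => by
            rw [Real.norm_eq_abs]; exact hD j ω)
      rw [integral_sub hint1 hint2, sub_eq_zero] at h0
      rw [h0]
      calc ∫ ω, Q j ω * (P'[h|Hf j]) ω ∂P
          = ∫ ω, (P[Z|G j]) ω * (P'[h|Hf j]) ω ∂P := by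
            refine integral_congr_ae ?_
            filter_upwards [ihae] with ω hω; rw [hω]
        _ = ∫ ω, h ω ∂P' :=
            lemC P P' hP'P hPP' K G Hf hG hHm hshared hjlt
              ((hm.mono (hG (j + 1)) le_rfl).aestronglyMeasurable) hb
end

section
/- (Finite-partition double robustness.) In the interlaced-filtration setup, define for adapted processes H = (H_k)_{k=0}^K and Q = (Q_k)_{k=0}^K the doubly robust functional Ξ_DR(H, Q) = Q_K ν − Σ_{k=0}^{K} (Q_k H_k − Q_{k−1} E_{P'}[H_k | 𝓗_{k−1}]), with the conventions Q_{−1} = 1 and E_{P'}[H₀ | 𝓗_{−1}] = E_{P'}[H₀]. Let H*_k = E_{P'}[ν | 𝓖_k] and Q*_k = E_P[Z | 𝓖_k]. Then Ξ_DR is doubly robust: (i) for every bounded adapted process Q, E_P[Ξ_DR(H*, Q)] = E_{P'}[ν]; and (ii) for every bounded adapted process H, E_P[Ξ_DR(H, Q*)] = E_{P'}[ν]. That is, the functional remains unbiased for the intervened mean E_{P'}[ν] when either the g-computation process or the inverse probability weighting process is correct, but not necessarily both. -/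
open MeasureTheory
open scoped ENNReal MeasureTheory

variable {Ω : Type*}

/-- The finite-partition doubly robust functional
`Ξ_DR(H, Q) = Q_K ν − Σ_{k=0}^{K} (Q_k H_k − Q_{k−1} E_{P'}[H_k | 𝓗_{k−1}])`,
with conventions `Q_{−1} = 1` and `E_{P'}[H₀ | 𝓗_{−1}] = E_{P'}[H₀]`. -/
noncomputable def XiDR {mΩ : MeasurableSpace Ω} (P' : Measure Ω) (K : ℕ)
    (Hf : ℕ → MeasurableSpace Ω) (ν : Ω → ℝ) (H Q : ℕ → Ω → ℝ) (ω : Ω) : ℝ :=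
  Q K ω * ν ω
    - ((Q 0 ω * H 0 ω - ∫ ω', H 0 ω' ∂P')
        + ∑ j ∈ Finset.range K,
            (Q (j + 1) ω * H (j + 1) ω - Q j ω * (P'[H (j + 1)|Hf j]) ω))


/-- Truncation of a function at level `max C 0`. -/
noncomputable def drTrunc (C : ℝ) (f : Ω → ℝ) : Ω → ℝ :=
  fun ω => max (-(max C 0)) (min (f ω) (max C 0))

lemma drTrunc_measurable {m : MeasurableSpace Ω} {C : ℝ} {f : Ω → ℝ}
    (hf : Measurable[m] f) : Measurable[m] (drTrunc C f) :=
  measurable_const.max (hf.min measurable_const)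

lemma drTrunc_bdd (C : ℝ) (f : Ω → ℝ) (ω : Ω) : |drTrunc C f ω| ≤ max C 0 := by
  have h0 : (0:ℝ) ≤ max C 0 := le_max_right _ _
  rw [abs_le]
  constructor
  · exact le_max_left _ _
  · exact max_le (by linarith) (min_le_right _ _)

lemma drTrunc_eq_of_abs_le {C : ℝ} {f : Ω → ℝ} {ω : Ω} (h : |f ω| ≤ C) :
    drTrunc C f ω = f ω := by
  rw [abs_le] at h
  have h1 : f ω ≤ max C 0 := h.2.trans (le_max_left _ _)
  have h2 : -(max C 0) ≤ f ω := by
    have : -max C 0 ≤ -C := neg_le_neg (le_max_left _ _)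
    linarith [h.1]
  rw [drTrunc, min_eq_left h1, max_eq_right h2]

lemma drTrunc_ae_eq [mΩ : MeasurableSpace Ω] {μ : Measure Ω} {C : ℝ} {f : Ω → ℝ}
    (h : ∀ᵐ ω ∂μ, |f ω| ≤ C) : f =ᵐ[μ] drTrunc C f :=
  h.mono fun ω hω => (drTrunc_eq_of_abs_le hω).symm

lemma dr_integrable_of_ae_bdd [mΩ : MeasurableSpace Ω] {μ : Measure Ω} [IsFiniteMeasure μ]
    {f : Ω → ℝ} (hf : AEStronglyMeasurable f μ) {C : ℝ} (h : ∀ᵐ ω ∂μ, |f ω| ≤ C) :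
    Integrable f μ :=
  Integrable.mono' (integrable_const C) hf (h.mono fun ω hω => by
    simpa [Real.norm_eq_abs] using hω)

lemma dr_integrable_mul [mΩ : MeasurableSpace Ω] {μ : Measure Ω}
    {q f : Ω → ℝ} (hq : Integrable q μ) (hf : AEStronglyMeasurable f μ) {C : ℝ}
    (hC : ∀ᵐ ω ∂μ, |f ω| ≤ C) : Integrable (fun ω => q ω * f ω) μ :=
  (hq.bdd_mul hf (hC.mono fun ω h => by simpa [Real.norm_eq_abs] using h)).congr
    (Filter.Eventually.of_forall fun ω => mul_comm _ _)

lemma dr_ae_bdd_condexp [mΩ : MeasurableSpace Ω] {μ : Measure Ω} {m : MeasurableSpace Ω}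
    {f : Ω → ℝ} {C : ℝ} (hC : 0 ≤ C) (h : ∀ᵐ ω ∂μ, |f ω| ≤ C) :
    ∀ᵐ ω ∂μ, |(μ[f|m]) ω| ≤ C := by
  have := ae_bdd_condExp_of_ae_bdd (m := m) (μ := μ) (R := ⟨C, hC⟩) (f := f)
    (by exact h)
  exact this

lemma dr_integral_mul_condexp [mΩ : MeasurableSpace Ω] {μ : Measure Ω} [IsProbabilityMeasure μ]
    {m : MeasurableSpace Ω} (hm : m ≤ mΩ) {q f : Ω → ℝ}
    (hq : StronglyMeasurable[m] q) (hqf : Integrable (fun ω => q ω * f ω) μ)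
    (hf : Integrable f μ) :
    ∫ ω, q ω * f ω ∂μ = ∫ ω, q ω * (μ[f|m]) ω ∂μ := by
  have h2 : μ[fun ω => q ω * f ω|m] =ᵐ[μ] fun ω => q ω * (μ[f|m]) ω := by
    have := condExp_mul_of_stronglyMeasurable_left (μ := μ) hq
      (by simpa [Pi.mul_def] using hqf) hf
    simpa [Pi.mul_def] using this
  rw [← integral_condExp hm (f := fun ω => q ω * f ω)]
  exact integral_congr_ae h2
/-- Finite-partition double robustness. In the interlaced-filtration setup
(`𝓖₀ ⊆ 𝓗₀ ⊆ 𝓖₁ ⊆ ⋯ ⊆ 𝓗_{K−1} ⊆ 𝓖_K`, `P` and `P'` equivalent, sharing the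
covariate transitions `E_P[·|𝓖_j] = E_{P'}[·|𝓖_j]` on bounded
`𝓗_j`-measurable functions), with `H*_k = E_{P'}[ν | 𝓖_k]` and
`Q*_k = E_P[dP'/dP | 𝓖_k]`, the functional `Ξ_DR` is doubly robust:
`E_P[Ξ_DR(H*, Q)] = E_{P'}[ν]` for every bounded adapted `Q`, and
`E_P[Ξ_DR(H, Q*)] = E_{P'}[ν]` for every bounded adapted `H`. -/
theorem doubly_robust_identification {mΩ : MeasurableSpace Ω}
    (P P' : Measure Ω) [IsProbabilityMeasure P] [IsProbabilityMeasure P']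
    (hP'P : P' ≪ P) (hPP' : P ≪ P')
    (K : ℕ) (G Hf : ℕ → MeasurableSpace Ω)
    (hGH : ∀ k, G k ≤ Hf k) (hHG : ∀ k, Hf k ≤ G (k + 1))
    (hG : ∀ k, G k ≤ mΩ) (hHm : ∀ k, Hf k ≤ mΩ)
    (hshared : ∀ j < K, ∀ f : Ω → ℝ, Measurable[Hf j] f → (∃ C, ∀ ω, |f ω| ≤ C) →
      P[f|G j] =ᵐ[P] P'[f|G j])
    (ν : Ω → ℝ) (hν : Measurable[G K] ν) (Cν : ℝ) (hνC : ∀ ω, |ν ω| ≤ Cν) :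
    (∀ Q : ℕ → Ω → ℝ, IsAdapted G Q → IsBddProc Q →
      ∫ ω, XiDR P' K Hf ν (fun k => P'[ν|G k]) Q ω ∂P = ∫ ω, ν ω ∂P') ∧
    (∀ H : ℕ → Ω → ℝ, IsAdapted G H → IsBddProc H →
      ∫ ω, XiDR P' K Hf ν H
        (fun k => P[fun ω' => (P'.rnDeriv P ω').toReal|G k]) ω ∂P
        = ∫ ω, ν ω ∂P') := by
  have haePP' : ∀ {p : Ω → Prop}, (∀ᵐ ω ∂P', p ω) → (∀ᵐ ω ∂P, p ω) :=
    fun h => hPP'.ae_le h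
  set M : ℝ := max Cν 0 with hMdef
  have hMnn : (0:ℝ) ≤ M := le_max_right _ _
  have hνM : ∀ ω, |ν ω| ≤ M := fun ω => (hνC ω).trans (le_max_left _ _)
  have hνm : Measurable ν := hν.mono (hG K) le_rfl
  have hνint' : Integrable ν P' :=
    dr_integrable_of_ae_bdd hνm.aestronglyMeasurable (Filter.Eventually.of_forall hνM)
  constructor
  · -- Part (i): correct g-computation process H* = E_{P'}[ν|𝓖_k]
    intro Q hQa hQb
    obtain ⟨CQ, hCQ⟩ := hQb
    have hQm : ∀ k, Measurable (Q k) := fun k => (hQa k).mono (hG k) le_rfl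
    -- properties of H*_k = P'[ν|G k]
    have hHsb' : ∀ k, ∀ᵐ ω ∂P', |(P'[ν|G k]) ω| ≤ M := fun k =>
      dr_ae_bdd_condexp hMnn (Filter.Eventually.of_forall hνM)
    have hHsbP : ∀ k, ∀ᵐ ω ∂P, |(P'[ν|G k]) ω| ≤ M := fun k => haePP' (hHsb' k)
    have hHsint : ∀ k, Integrable (P'[ν|G k]) P := fun k =>
      dr_integrable_of_ae_bdd
        ((stronglyMeasurable_condExp.mono (hG k)).aestronglyMeasurable) (hHsbP k)
    have hint1 : ∀ k, Integrable (fun ω => Q k ω * (P'[ν|G k]) ω) P := fun k =>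
      (hHsint k).bdd_mul (hQm k).aestronglyMeasurable
        (Filter.Eventually.of_forall fun ω => by
          simpa [Real.norm_eq_abs] using hCQ k ω)
    -- properties of the conditional expectations P'[H*_{j+1}|Hf j]
    have hceb' : ∀ j, ∀ᵐ ω ∂P', |(P'[P'[ν|G (j+1)]|Hf j]) ω| ≤ M := fun j =>
      dr_ae_bdd_condexp hMnn (hHsb' (j+1))
    have hceint : ∀ j, Integrable (P'[P'[ν|G (j+1)]|Hf j]) P := fun j =>
      dr_integrable_of_ae_bdd
        ((stronglyMeasurable_condExp.mono (hHm j)).aestronglyMeasurable)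
        (haePP' (hceb' j))
    have hint2 : ∀ j, Integrable (fun ω => Q j ω * (P'[P'[ν|G (j+1)]|Hf j]) ω) P := fun j =>
      (hceint j).bdd_mul (hQm j).aestronglyMeasurable
        (Filter.Eventually.of_forall fun ω => by
          simpa [Real.norm_eq_abs] using hCQ j ω)
    -- key step: for j < K, ∫ Q_j E_{P'}[H*_{j+1}|Hf j] dP = ∫ Q_j H*_j dP
    have key : ∀ j < K,
        ∫ ω, Q j ω * (P'[P'[ν|G (j+1)]|Hf j]) ω ∂P
          = ∫ ω, Q j ω * (P'[ν|G j]) ω ∂P := by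
      intro j hj
      have hgb' : ∀ᵐ ω ∂P', |(P'[ν|Hf j]) ω| ≤ M :=
        dr_ae_bdd_condexp hMnn (Filter.Eventually.of_forall hνM)
      set g' : Ω → ℝ := drTrunc M (P'[ν|Hf j]) with hg'def
      have hg'm : Measurable[Hf j] g' :=
        drTrunc_measurable stronglyMeasurable_condExp.measurable
      have hg'b : ∀ ω, |g' ω| ≤ M := fun ω => by
        simpa [max_eq_left hMnn] using drTrunc_bdd M (P'[ν|Hf j]) ω
      have hgg' : (P'[ν|Hf j]) =ᵐ[P'] g' := drTrunc_ae_eq hgb'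
      have hce : P'[P'[ν|G (j+1)]|Hf j] =ᵐ[P'] (P'[ν|Hf j]) :=
        condExp_condExp_of_le (hHG j) (hG (j+1))
      have hceg' : P'[P'[ν|G (j+1)]|Hf j] =ᵐ[P] g' := haePP' (hce.trans hgg')
      have hg'int : Integrable g' P :=
        dr_integrable_of_ae_bdd ((hg'm.mono (hHm j) le_rfl).aestronglyMeasurable)
          (Filter.Eventually.of_forall hg'b)
      have hQg'int : Integrable (fun ω => Q j ω * g' ω) P :=
        hg'int.bdd_mul (hQm j).aestronglyMeasurable
          (Filter.Eventually.of_forall fun ω => by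
            simpa [Real.norm_eq_abs] using hCQ j ω)
      have hsh : P[g'|G j] =ᵐ[P] P'[g'|G j] := hshared j hj g' hg'm ⟨M, hg'b⟩
      have e3 : P'[g'|G j] =ᵐ[P'] P'[ν|G j] :=
        (condExp_congr_ae hgg'.symm).trans (condExp_condExp_of_le (hGH j) (hHm j))
      have e3P : P[g'|G j] =ᵐ[P] P'[ν|G j] := hsh.trans (haePP' e3)
      calc ∫ ω, Q j ω * (P'[P'[ν|G (j+1)]|Hf j]) ω ∂P
          = ∫ ω, Q j ω * g' ω ∂P :=
            integral_congr_ae (hceg'.mono fun ω h => by dsimp only; rw [h])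
        _ = ∫ ω, Q j ω * (P[g'|G j]) ω ∂P :=
            dr_integral_mul_condexp (hG j) (hQa j).stronglyMeasurable hQg'int hg'int
        _ = ∫ ω, Q j ω * (P'[ν|G j]) ω ∂P :=
            integral_congr_ae (e3P.mono fun ω h => by dsimp only; rw [h])
    have hHsK : (P'[ν|G K]) = ν :=
      condExp_of_stronglyMeasurable (hG K) hν.stronglyMeasurable hνint'
    -- assemble
    simp only [XiDR]
    have hKν : Integrable (fun ω => Q K ω * ν ω) P := by
      have := hint1 K; rwa [hHsK] at this
    have hsummand : ∀ j : ℕ, Integrable (fun ω =>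
        Q (j+1) ω * (P'[ν|G (j+1)]) ω - Q j ω * (P'[P'[ν|G (j+1)]|Hf j]) ω) P :=
      fun j => (hint1 (j+1)).sub (hint2 j)
    have hfirst : Integrable (fun ω =>
        Q 0 ω * (P'[ν|G 0]) ω - ∫ ω', (P'[ν|G 0]) ω' ∂P') P :=
      (hint1 0).sub (integrable_const _)
    have hsumint : Integrable (fun ω => ∑ j ∈ Finset.range K,
        (Q (j+1) ω * (P'[ν|G (j+1)]) ω - Q j ω * (P'[P'[ν|G (j+1)]|Hf j]) ω)) P :=
      integrable_finset_sum _ fun j _ => hsummand j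
    have hrest : Integrable (fun ω =>
        (Q 0 ω * (P'[ν|G 0]) ω - ∫ ω', (P'[ν|G 0]) ω' ∂P')
          + ∑ j ∈ Finset.range K,
            (Q (j+1) ω * (P'[ν|G (j+1)]) ω - Q j ω * (P'[P'[ν|G (j+1)]|Hf j]) ω)) P :=
      hfirst.add hsumint
    have h1 : ∫ ω, (Q K ω * ν ω -
        ((Q 0 ω * (P'[ν|G 0]) ω - ∫ ω', (P'[ν|G 0]) ω' ∂P')
          + ∑ j ∈ Finset.range K,
            (Q (j+1) ω * (P'[ν|G (j+1)]) ω - Q j ω * (P'[P'[ν|G (j+1)]|Hf j]) ω))) ∂P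
        = (∫ ω, Q K ω * ν ω ∂P)
          - ∫ ω, ((Q 0 ω * (P'[ν|G 0]) ω - ∫ ω', (P'[ν|G 0]) ω' ∂P')
              + ∑ j ∈ Finset.range K,
                (Q (j+1) ω * (P'[ν|G (j+1)]) ω
                  - Q j ω * (P'[P'[ν|G (j+1)]|Hf j]) ω)) ∂P :=
      integral_sub hKν hrest
    have h2 : ∫ ω, ((Q 0 ω * (P'[ν|G 0]) ω - ∫ ω', (P'[ν|G 0]) ω' ∂P')
          + ∑ j ∈ Finset.range K,
            (Q (j+1) ω * (P'[ν|G (j+1)]) ω - Q j ω * (P'[P'[ν|G (j+1)]|Hf j]) ω)) ∂P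
        = (∫ ω, (Q 0 ω * (P'[ν|G 0]) ω - ∫ ω', (P'[ν|G 0]) ω' ∂P') ∂P)
          + ∫ ω, (∑ j ∈ Finset.range K,
              (Q (j+1) ω * (P'[ν|G (j+1)]) ω
                - Q j ω * (P'[P'[ν|G (j+1)]|Hf j]) ω)) ∂P :=
      integral_add hfirst hsumint
    have h3 : ∫ ω, (Q 0 ω * (P'[ν|G 0]) ω - ∫ ω', (P'[ν|G 0]) ω' ∂P') ∂P
        = (∫ ω, Q 0 ω * (P'[ν|G 0]) ω ∂P) - ∫ ω', (P'[ν|G 0]) ω' ∂P' := by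
      rw [integral_sub (hint1 0) (integrable_const _), integral_const]
      simp
    have h4 : ∫ ω, (∑ j ∈ Finset.range K,
          (Q (j+1) ω * (P'[ν|G (j+1)]) ω - Q j ω * (P'[P'[ν|G (j+1)]|Hf j]) ω)) ∂P
        = (∫ ω, Q K ω * (P'[ν|G K]) ω ∂P) - ∫ ω, Q 0 ω * (P'[ν|G 0]) ω ∂P := by
      rw [integral_finset_sum _ fun j _ => hsummand j]
      calc ∑ j ∈ Finset.range K, ∫ ω,
              (Q (j+1) ω * (P'[ν|G (j+1)]) ω - Q j ω * (P'[P'[ν|G (j+1)]|Hf j]) ω) ∂P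
          = ∑ j ∈ Finset.range K,
              ((∫ ω, Q (j+1) ω * (P'[ν|G (j+1)]) ω ∂P)
                - ∫ ω, Q j ω * (P'[ν|G j]) ω ∂P) := by
            refine Finset.sum_congr rfl fun j hj => ?_
            rw [integral_sub (hint1 (j+1)) (hint2 j), key j (Finset.mem_range.mp hj)]
        _ = _ := Finset.sum_range_sub (fun k => ∫ ω, Q k ω * (P'[ν|G k]) ω ∂P) K
    have hc : (∫ ω', (P'[ν|G 0]) ω' ∂P') = ∫ ω, ν ω ∂P' := integral_condExp (hG 0)
    rw [h1, h2, h3, h4, hHsK, hc]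
    ring
  · -- Part (ii): correct weights Q* = E_P[dP'/dP|G k]
    intro H hHa hHb
    obtain ⟨CH, hCH⟩ := hHb
    set MH : ℝ := max CH 0 with hMHdef
    have hMHnn : (0:ℝ) ≤ MH := le_max_right _ _
    have hHM : ∀ k ω, |H k ω| ≤ MH := fun k ω => (hCH k ω).trans (le_max_left _ _)
    have hHmm : ∀ k, Measurable (H k) := fun k => (hHa k).mono (hG k) le_rfl
    have hHint' : ∀ k, Integrable (H k) P' := fun k =>
      dr_integrable_of_ae_bdd (hHmm k).aestronglyMeasurable
        (Filter.Eventually.of_forall (hHM k))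
    set Z : Ω → ℝ := fun ω => (P'.rnDeriv P ω).toReal with hZdef
    have hZint : Integrable Z P := Measure.integrable_toReal_rnDeriv
    have hQsint : ∀ k, Integrable (P[Z|G k]) P := fun _ => integrable_condExp
    -- for bounded G k-measurable f : ∫ Q*_k f dP = ∫ f dP'
    have hB : ∀ (k : ℕ) (f : Ω → ℝ), Measurable[G k] f → ∀ C : ℝ, (∀ ω, |f ω| ≤ C) →
        ∫ ω, (P[Z|G k]) ω * f ω ∂P = ∫ ω, f ω ∂P' := by
      intro k f hfm C hfC
      have hfmm : Measurable f := hfm.mono (hG k) le_rfl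
      have hfZ : Integrable (fun ω => f ω * Z ω) P :=
        hZint.bdd_mul hfmm.aestronglyMeasurable
          (Filter.Eventually.of_forall fun ω => by simpa [Real.norm_eq_abs] using hfC ω)
      have h1 : ∫ ω, f ω * Z ω ∂P = ∫ ω, f ω * (P[Z|G k]) ω ∂P :=
        dr_integral_mul_condexp (hG k) hfm.stronglyMeasurable hfZ hZint
      have h2 : ∫ ω, f ω * Z ω ∂P = ∫ ω, f ω ∂P' := by
        have := integral_rnDeriv_smul (μ := P') (ν := P) hP'P (f := f)
        simp only [smul_eq_mul] at this
        rw [← this]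
        exact integral_congr_ae (Filter.Eventually.of_forall fun ω => mul_comm _ _)
      calc ∫ ω, (P[Z|G k]) ω * f ω ∂P
          = ∫ ω, f ω * (P[Z|G k]) ω ∂P :=
            integral_congr_ae (Filter.Eventually.of_forall fun ω => mul_comm _ _)
        _ = ∫ ω, f ω * Z ω ∂P := h1.symm
        _ = ∫ ω, f ω ∂P' := h2
    -- integrability of the pieces
    have hint1 : ∀ k l : ℕ, Integrable (fun ω => (P[Z|G k]) ω * H l ω) P := fun k l =>
      dr_integrable_mul (hQsint k) (hHmm l).aestronglyMeasurable
        (Filter.Eventually.of_forall (hHM l))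
    have hintν : Integrable (fun ω => (P[Z|G K]) ω * ν ω) P :=
      dr_integrable_mul (hQsint K) hνm.aestronglyMeasurable
        (Filter.Eventually.of_forall hνM)
    have hceb' : ∀ j, ∀ᵐ ω ∂P', |(P'[H (j+1)|Hf j]) ω| ≤ MH := fun j =>
      dr_ae_bdd_condexp hMHnn (Filter.Eventually.of_forall (hHM (j+1)))
    have hint2 : ∀ j, Integrable (fun ω => (P[Z|G j]) ω * (P'[H (j+1)|Hf j]) ω) P :=
      fun j => dr_integrable_mul (hQsint j)
        ((stronglyMeasurable_condExp.mono (hHm j)).aestronglyMeasurable)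
        (haePP' (hceb' j))
    -- key step: ∫ Q*_j E_{P'}[H_{j+1}|Hf j] dP = ∫ H_{j+1} dP'
    have key : ∀ j < K,
        ∫ ω, (P[Z|G j]) ω * (P'[H (j+1)|Hf j]) ω ∂P = ∫ ω, H (j+1) ω ∂P' := by
      intro j hj
      set g' : Ω → ℝ := drTrunc MH (P'[H (j+1)|Hf j]) with hg'def
      have hg'm : Measurable[Hf j] g' :=
        drTrunc_measurable stronglyMeasurable_condExp.measurable
      have hg'b : ∀ ω, |g' ω| ≤ MH := fun ω => by
        simpa [max_eq_left hMHnn] using drTrunc_bdd MH (P'[H (j+1)|Hf j]) ω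
      have hgg' : (P'[H (j+1)|Hf j]) =ᵐ[P'] g' := drTrunc_ae_eq (hceb' j)
      have hg'int : Integrable g' P :=
        dr_integrable_of_ae_bdd ((hg'm.mono (hHm j) le_rfl).aestronglyMeasurable)
          (Filter.Eventually.of_forall hg'b)
      have hg'int' : Integrable g' P' :=
        dr_integrable_of_ae_bdd ((hg'm.mono (hHm j) le_rfl).aestronglyMeasurable)
          (Filter.Eventually.of_forall hg'b)
      have hQg'int : Integrable (fun ω => (P[Z|G j]) ω * g' ω) P :=
        dr_integrable_mul (hQsint j)
          ((hg'm.mono (hHm j) le_rfl).aestronglyMeasurable)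
          (Filter.Eventually.of_forall hg'b)
      have hsh : P[g'|G j] =ᵐ[P] P'[g'|G j] := hshared j hj g' hg'm ⟨MH, hg'b⟩
      -- truncate the outer conditional expectation as well
      have hhb' : ∀ᵐ ω ∂P', |(P'[g'|G j]) ω| ≤ MH :=
        dr_ae_bdd_condexp hMHnn (Filter.Eventually.of_forall hg'b)
      set h' : Ω → ℝ := drTrunc MH (P'[g'|G j]) with hh'def
      have hh'm : Measurable[G j] h' :=
        drTrunc_measurable stronglyMeasurable_condExp.measurable
      have hh'b : ∀ ω, |h' ω| ≤ MH := fun ω => by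
        simpa [max_eq_left hMHnn] using drTrunc_bdd MH (P'[g'|G j]) ω
      have hhh' : (P'[g'|G j]) =ᵐ[P'] h' := drTrunc_ae_eq hhb'
      have hQceh' : P[g'|G j] =ᵐ[P] h' := hsh.trans (haePP' hhh')
      calc ∫ ω, (P[Z|G j]) ω * (P'[H (j+1)|Hf j]) ω ∂P
          = ∫ ω, (P[Z|G j]) ω * g' ω ∂P :=
            integral_congr_ae ((haePP' hgg').mono fun ω h => by dsimp only; rw [h])
        _ = ∫ ω, (P[Z|G j]) ω * (P[g'|G j]) ω ∂P :=
            dr_integral_mul_condexp (hG j) stronglyMeasurable_condExp hQg'int hg'int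
        _ = ∫ ω, (P[Z|G j]) ω * h' ω ∂P :=
            integral_congr_ae (hQceh'.mono fun ω h => by dsimp only; rw [h])
        _ = ∫ ω, h' ω ∂P' := hB j h' hh'm MH hh'b
        _ = ∫ ω, (P'[g'|G j]) ω ∂P' := (integral_congr_ae hhh').symm
        _ = ∫ ω, g' ω ∂P' := integral_condExp (hG j)
        _ = ∫ ω, (P'[H (j+1)|Hf j]) ω ∂P' := (integral_congr_ae hgg').symm
        _ = ∫ ω, H (j+1) ω ∂P' := integral_condExp (hHm j)
    -- assemble
    simp only [XiDR]
    have hsummand : ∀ j : ℕ, Integrable (fun ω =>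
        (P[Z|G (j+1)]) ω * H (j+1) ω - (P[Z|G j]) ω * (P'[H (j+1)|Hf j]) ω) P :=
      fun j => (hint1 (j+1) (j+1)).sub (hint2 j)
    have hfirst : Integrable (fun ω =>
        (P[Z|G 0]) ω * H 0 ω - ∫ ω', H 0 ω' ∂P') P :=
      (hint1 0 0).sub (integrable_const _)
    have hsumint : Integrable (fun ω => ∑ j ∈ Finset.range K,
        ((P[Z|G (j+1)]) ω * H (j+1) ω - (P[Z|G j]) ω * (P'[H (j+1)|Hf j]) ω)) P :=
      integrable_finset_sum _ fun j _ => hsummand j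
    have hrest : Integrable (fun ω =>
        ((P[Z|G 0]) ω * H 0 ω - ∫ ω', H 0 ω' ∂P')
          + ∑ j ∈ Finset.range K,
            ((P[Z|G (j+1)]) ω * H (j+1) ω - (P[Z|G j]) ω * (P'[H (j+1)|Hf j]) ω)) P :=
      hfirst.add hsumint
    have h1 : ∫ ω, ((P[Z|G K]) ω * ν ω -
        (((P[Z|G 0]) ω * H 0 ω - ∫ ω', H 0 ω' ∂P')
          + ∑ j ∈ Finset.range K,
            ((P[Z|G (j+1)]) ω * H (j+1) ω - (P[Z|G j]) ω * (P'[H (j+1)|Hf j]) ω))) ∂P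
        = (∫ ω, (P[Z|G K]) ω * ν ω ∂P)
          - ∫ ω, (((P[Z|G 0]) ω * H 0 ω - ∫ ω', H 0 ω' ∂P')
              + ∑ j ∈ Finset.range K,
                ((P[Z|G (j+1)]) ω * H (j+1) ω
                  - (P[Z|G j]) ω * (P'[H (j+1)|Hf j]) ω)) ∂P :=
      integral_sub hintν hrest
    have h2 : ∫ ω, (((P[Z|G 0]) ω * H 0 ω - ∫ ω', H 0 ω' ∂P')
          + ∑ j ∈ Finset.range K,
            ((P[Z|G (j+1)]) ω * H (j+1) ω - (P[Z|G j]) ω * (P'[H (j+1)|Hf j]) ω)) ∂P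
        = (∫ ω, ((P[Z|G 0]) ω * H 0 ω - ∫ ω', H 0 ω' ∂P') ∂P)
          + ∫ ω, (∑ j ∈ Finset.range K,
              ((P[Z|G (j+1)]) ω * H (j+1) ω
                - (P[Z|G j]) ω * (P'[H (j+1)|Hf j]) ω)) ∂P :=
      integral_add hfirst hsumint
    have h3 : ∫ ω, ((P[Z|G 0]) ω * H 0 ω - ∫ ω', H 0 ω' ∂P') ∂P = 0 := by
      rw [integral_sub (hint1 0 0) (integrable_const _), integral_const,
        hB 0 (H 0) (hHa 0) MH (hHM 0)]
      simp
    have h4 : ∫ ω, (∑ j ∈ Finset.range K,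
          ((P[Z|G (j+1)]) ω * H (j+1) ω - (P[Z|G j]) ω * (P'[H (j+1)|Hf j]) ω)) ∂P
        = 0 := by
      rw [integral_finset_sum _ fun j _ => hsummand j]
      refine Finset.sum_eq_zero fun j hj => ?_
      rw [integral_sub (hint1 (j+1) (j+1)) (hint2 j), key j (Finset.mem_range.mp hj),
        hB (j+1) (H (j+1)) (hHa (j+1)) MH (hHM (j+1))]
      ring
    rw [h1, h2, h3, h4, hB K ν hν Cν hνC]
    ring
end

section
/- (Score construction for the tangent space.) Let (Ω, 𝓕, P) be a probability space and let g : Ω → ℝ be a bounded measurable function with ∫ g dP = 0. For each real ε with |ε| · sup|g| < 1, define the measure P_ε on (Ω, 𝓕) by dP_ε = (1 + ε g) dP. Then: (i) each P_ε is a probability measure with P_ε ≪ P and P ≪ P_ε; (ii) for every bounded measurable f, the map ε ↦ ∫ f dP_ε is differentiable at ε = 0 with derivative ∫ f g dP; and (iii) the parametric submodel {P_ε} is differentiable in quadratic mean at ε = 0 with score g: the functions ε^{-1}(√(1 + ε g) − 1) converge to g/2 in L²(P) as ε → 0. (This exhibits every bounded mean-zero function as a score of a one-dimensional parametric submodel through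 P, the key step in showing the tangent space at P is all of L²₀(P).) -/
open MeasureTheory Filter Topology
open scoped ENNReal

/-- The one-dimensional parametric submodel through `P` with score `g`:
`dP_ε = (1 + ε g) dP`. -/
noncomputable def scorePerturb {Ω : Type*} [MeasurableSpace Ω] (P : Measure Ω)
    (g : Ω → ℝ) (ε : ℝ) : Measure Ω :=
  P.withDensity (fun ω => ENNReal.ofReal (1 + ε * g ω))

lemma sqrt_sub_one_abs_le {x : ℝ} (hx : 0 ≤ 1 + x) : |Real.sqrt (1 + x) - 1| ≤ |x| := by
  have hs : 0 ≤ Real.sqrt (1 + x) := Real.sqrt_nonneg _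
  have hsq : Real.sqrt (1 + x) ^ 2 = 1 + x := Real.sq_sqrt hx
  rcases abs_cases (Real.sqrt (1 + x) - 1) with ⟨h1, h2⟩ | ⟨h1, h2⟩ <;>
    rcases abs_cases x with ⟨h3, h4⟩ | ⟨h3, h4⟩ <;> nlinarith

lemma integral_scorePerturb' {Ω : Type*} [MeasurableSpace Ω] (P : Measure Ω)
    {g : Ω → ℝ} (hg : Measurable g) (ε : ℝ) (hpos : ∀ ω, 0 ≤ 1 + ε * g ω)
    (f : Ω → ℝ) :
    ∫ ω, f ω ∂(scorePerturb P g ε) = ∫ ω, (1 + ε * g ω) * f ω ∂P := by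
  have hmeas : Measurable fun ω => (1 + ε * g ω).toNNReal :=
    ((hg.const_mul ε).const_add 1).real_toNNReal
  have h2 : (fun ω => ENNReal.ofReal (1 + ε * g ω))
      = fun ω => ((1 + ε * g ω).toNNReal : ℝ≥0∞) := rfl
  rw [scorePerturb, h2, integral_withDensity_eq_integral_smul hmeas]
  refine integral_congr_ae (Eventually.of_forall fun ω => ?_)
  simp [NNReal.smul_def, Real.coe_toNNReal _ (hpos ω)]

theorem score_construction_parts12 {Ω : Type*} [MeasurableSpace Ω]
    (P : Measure Ω) [IsProbabilityMeasure P]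
    (g : Ω → ℝ) (hg : Measurable g) (C : ℝ) (hgC : ∀ ω, |g ω| ≤ C)
    (hmean : ∫ ω, g ω ∂P = 0) :
    (∀ ε : ℝ, |ε| * C < 1 →
      IsProbabilityMeasure (scorePerturb P g ε) ∧
        scorePerturb P g ε ≪ P ∧ P ≪ scorePerturb P g ε) ∧
    (∀ f : Ω → ℝ, Measurable f → ∀ D : ℝ, (∀ ω, |f ω| ≤ D) →
      HasDerivAt (fun ε : ℝ => ∫ ω, f ω ∂(scorePerturb P g ε))
        (∫ ω, f ω * g ω ∂P) 0) := by
  have hΩ : Nonempty Ω := by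
    by_contra h
    rw [not_nonempty_iff] at h
    have h1 := measure_univ (μ := P)
    rw [Set.univ_eq_empty_iff.mpr h] at h1
    simp at h1
  have hC0 : 0 ≤ C := le_trans (abs_nonneg _) (hgC (Classical.arbitrary Ω))
  have hgint : Integrable g P := by
    refine Integrable.mono' (integrable_const C) hg.aestronglyMeasurable ?_
    exact Eventually.of_forall fun ω => by simpa [Real.norm_eq_abs] using hgC ω
  -- positivity of density
  have hpos : ∀ ε : ℝ, |ε| * C < 1 → ∀ ω, 0 < 1 + ε * g ω := by
    intro ε hε ω
    have h1 : |ε * g ω| ≤ |ε| * C := by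
      rw [abs_mul]
      exact mul_le_mul_of_nonneg_left (hgC ω) (abs_nonneg _)
    have := neg_abs_le (ε * g ω)
    linarith
  have hint1 : ∀ ε : ℝ, Integrable (fun ω => 1 + ε * g ω) P :=
    fun ε => (integrable_const 1).add ((hgint.const_mul ε))
  have hintegral : ∀ ε : ℝ, ∫ ω, (1 + ε * g ω) ∂P = 1 := by
    intro ε
    rw [integral_add (integrable_const 1) (hgint.const_mul ε), integral_const_mul, hmean]
    simp
  constructor
  · intro ε hε
    refine ⟨⟨?_⟩, withDensity_absolutelyContinuous _ _, ?_⟩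
    · rw [scorePerturb, withDensity_apply _ MeasurableSet.univ, Measure.restrict_univ,
        ← ofReal_integral_eq_lintegral_ofReal (hint1 ε)
          (Eventually.of_forall fun ω => (hpos ε hε ω).le), hintegral ε]
      simp
    · refine withDensity_absolutelyContinuous'
        (((hg.const_mul ε).const_add 1).ennreal_ofReal).aemeasurable ?_
      exact Eventually.of_forall fun ω => (ENNReal.ofReal_pos.mpr (hpos ε hε ω)).ne'
  · intro f hf D hfD
    have hD0 : 0 ≤ D := le_trans (abs_nonneg _) (hfD (Classical.arbitrary Ω))
    have hfint : Integrable f P := by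
      refine Integrable.mono' (integrable_const D) hf.aestronglyMeasurable ?_
      exact Eventually.of_forall fun ω => by simpa [Real.norm_eq_abs] using hfD ω
    have hfgint : Integrable (fun ω => g ω * f ω) P := by
      refine Integrable.mono' (integrable_const (C * D)) (hg.mul hf).aestronglyMeasurable ?_
      refine Eventually.of_forall fun ω => ?_
      rw [Real.norm_eq_abs, abs_mul]
      exact mul_le_mul (hgC ω) (hfD ω) (abs_nonneg _) hC0
    have haff : HasDerivAt (fun ε : ℝ => (∫ ω, f ω ∂P) + ε * ∫ ω, f ω * g ω ∂P)
        (∫ ω, f ω * g ω ∂P) 0 := (hasDerivAt_mul_const _).const_add _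
    refine haff.congr_of_eventuallyEq ?_
    have hδ : (0:ℝ) < 1 / (C + 1) := by positivity
    filter_upwards [eventually_abs_sub_lt 0 hδ] with ε hε
    have hεC : |ε| * C < 1 := by
      rw [sub_zero] at hε
      have h1 : |ε| * C ≤ |ε| * (C + 1) := by nlinarith [abs_nonneg ε]
      have h2 : |ε| * (C + 1) < (1 / (C + 1)) * (C + 1) := by
        apply mul_lt_mul_of_pos_right hε; linarith
      rw [one_div, inv_mul_cancel₀ (by linarith : C + 1 ≠ 0)] at h2
      linarith
    rw [integral_scorePerturb' P hg ε (fun ω => (hpos ε hεC ω).le) f]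
    have : ∀ ω, (1 + ε * g ω) * f ω = f ω + ε * (g ω * f ω) := fun ω => by ring
    simp_rw [this]
    rw [integral_add hfint (hfgint.const_mul ε), integral_const_mul]
    congr 2
    exact integral_congr_ae (Eventually.of_forall fun ω => mul_comm _ _)

theorem score_part3 {Ω : Type*} [MeasurableSpace Ω]
    (P : Measure Ω) [IsProbabilityMeasure P]
    (g : Ω → ℝ) (hg : Measurable g) (C : ℝ) (hgC : ∀ ω, |g ω| ≤ C)
    (hC0 : 0 ≤ C) :
    Tendsto
      (fun ε : ℝ =>
        eLpNorm (fun ω => ε⁻¹ * (Real.sqrt (1 + ε * g ω) - 1) - g ω / 2) 2 P)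
      (𝓝[≠] (0 : ℝ)) (𝓝 0) := by
  set h : ℝ → Ω → ℝ := fun ε ω => ε⁻¹ * (Real.sqrt (1 + ε * g ω) - 1) - g ω / 2 with hh
  have hmeas : ∀ ε, Measurable (h ε) := fun ε =>
    ((((hg.const_mul ε).const_add 1).sqrt.sub measurable_const).const_mul ε⁻¹).sub
      (hg.div_const 2)
  -- pointwise limit
  have hptwise : ∀ ω, Tendsto (fun ε => h ε ω) (𝓝[≠] (0:ℝ)) (𝓝 0) := by
    intro ω
    have hinner : HasDerivAt (fun ε : ℝ => 1 + ε * g ω) (g ω) 0 :=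
      (hasDerivAt_mul_const _).const_add _
    have hsqrt : HasDerivAt Real.sqrt (1 / (2 * Real.sqrt (1 + 0 * g ω))) (1 + 0 * g ω) :=
      Real.hasDerivAt_sqrt (by norm_num)
    have hcomp : HasDerivAt (fun ε : ℝ => Real.sqrt (1 + ε * g ω)) (g ω / 2) 0 := by
      have := hsqrt.comp 0 hinner
      simpa [Function.comp_def] using this.congr_deriv (by simp [Real.sqrt_one]; ring)
    have hslope := hasDerivAt_iff_tendsto_slope.mp hcomp
    have heq : ∀ ε ∈ ({0}ᶜ : Set ℝ), slope (fun ε : ℝ => Real.sqrt (1 + ε * g ω)) 0 ε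
        = ε⁻¹ * (Real.sqrt (1 + ε * g ω) - 1) := by
      intro ε hε
      rw [slope_def_field]
      simp [div_eq_inv_mul]
    have : Tendsto (fun ε : ℝ => ε⁻¹ * (Real.sqrt (1 + ε * g ω) - 1)) (𝓝[≠] (0:ℝ))
        (𝓝 (g ω / 2)) := by
      refine hslope.congr' ?_
      filter_upwards [self_mem_nhdsWithin] with ε hε using heq ε hε
    simpa using this.sub_const (g ω / 2)
  -- the lintegral of squares tends to zero
  set F : ℝ → Ω → ℝ≥0∞ := fun ε ω => (‖h ε ω‖₊ : ℝ≥0∞) ^ (2:ℝ) with hF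
  have hbound_ev : ∀ᶠ ε in 𝓝[≠] (0:ℝ), ∀ᵐ ω ∂P,
      F ε ω ≤ ENNReal.ofReal (3 * C / 2 + 1) ^ (2:ℝ) := by
    have hδ : (0:ℝ) < 1 / (C + 1) := by positivity
    have hmem : {ε : ℝ | |ε - 0| < 1 / (C + 1)} ∈ 𝓝[≠] (0:ℝ) :=
      nhdsWithin_le_nhds (eventually_abs_sub_lt 0 hδ)
    filter_upwards [hmem, self_mem_nhdsWithin] with ε hε hε0
    refine Eventually.of_forall fun ω => ?_
    have hε0' : ε ≠ 0 := hε0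
    rw [sub_zero] at hε
    have hεg : |ε * g ω| ≤ |ε| * C := by
      rw [abs_mul]; exact mul_le_mul_of_nonneg_left (hgC ω) (abs_nonneg _)
    have hεC : |ε| * C < 1 := by
      have h1 : |ε| * C ≤ |ε| * (C + 1) := by nlinarith [abs_nonneg ε]
      have h2 : |ε| * (C + 1) < (1 / (C + 1)) * (C + 1) :=
        mul_lt_mul_of_pos_right hε (by linarith)
      rw [one_div, inv_mul_cancel₀ (by linarith : C + 1 ≠ 0)] at h2
      linarith
    have hnn : 0 ≤ 1 + ε * g ω := by
      have := neg_abs_le (ε * g ω); linarith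
    have habs : |h ε ω| ≤ 3 * C / 2 + 1 := by
      have h1 : |Real.sqrt (1 + ε * g ω) - 1| ≤ |ε * g ω| := sqrt_sub_one_abs_le hnn
      have h2 : |ε⁻¹ * (Real.sqrt (1 + ε * g ω) - 1)| ≤ |g ω| := by
        rw [abs_mul, abs_inv]
        rw [abs_mul] at h1
        have hεpos : 0 < |ε| := abs_pos.mpr hε0'
        rw [inv_mul_le_iff₀ hεpos]
        linarith
      calc |h ε ω| ≤ |ε⁻¹ * (Real.sqrt (1 + ε * g ω) - 1)| + |g ω / 2| := abs_sub _ _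
        _ ≤ |g ω| + |g ω| / 2 := by rw [abs_div]; simp only [abs_two]; linarith [h2]
        _ ≤ 3 * C / 2 + 1 := by have := hgC ω; linarith
    rw [hF]
    refine ENNReal.rpow_le_rpow ?_ (by norm_num)
    rw [← enorm_eq_nnnorm, ← ofReal_norm_eq_enorm, Real.norm_eq_abs]
    exact ENNReal.ofReal_le_ofReal (by linarith)
  have hlim : Tendsto (fun ε => ∫⁻ ω, F ε ω ∂P) (𝓝[≠] (0:ℝ)) (𝓝 0) := by
    have h0 : (0:ℝ≥0∞) = ∫⁻ (_ : Ω), 0 ∂P := by simp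
    rw [h0]
    refine tendsto_lintegral_filter_of_dominated_convergence
      (fun _ => ENNReal.ofReal (3 * C / 2 + 1) ^ (2:ℝ)) ?_ hbound_ev ?_ ?_
    · refine Eventually.of_forall fun ε => ?_
      exact ENNReal.continuous_rpow_const.measurable.comp ((hmeas ε).nnnorm.coe_nnreal_ennreal)
    · rw [lintegral_const, measure_univ, mul_one]
      exact (ENNReal.rpow_ne_top_of_nonneg (by norm_num) ENNReal.ofReal_ne_top)
    · refine Eventually.of_forall fun ω => ?_
      have h1 : Tendsto (fun ε => (‖h ε ω‖₊ : ℝ≥0∞)) (𝓝[≠] (0:ℝ)) (𝓝 0) := by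
        have := (continuous_nnnorm.tendsto (0:ℝ)).comp (hptwise ω)
        exact ENNReal.tendsto_coe.mpr (by simpa [Function.comp_def] using this)
      have := ((ENNReal.continuous_rpow_const (y := (2:ℝ))).tendsto 0).comp h1
      simpa [hF, Function.comp_def, ENNReal.zero_rpow_of_pos (by norm_num : (0:ℝ) < 2)] using this
  -- conclude via eLpNorm formula
  have heq : ∀ ε : ℝ, eLpNorm (h ε) 2 P = (∫⁻ ω, F ε ω ∂P) ^ (1/2 : ℝ) := by
    intro ε
    rw [eLpNorm_eq_lintegral_rpow_enorm_toReal (by norm_num) (by norm_num), ENNReal.toReal_ofNat]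
    simp_rw [enorm_eq_nnnorm, hF]
  simp_rw [hh] at heq ⊢
  rw [show (fun ε : ℝ => eLpNorm (fun ω => ε⁻¹ * (Real.sqrt (1 + ε * g ω) - 1) - g ω / 2) 2 P)
      = fun ε => (∫⁻ ω, F ε ω ∂P) ^ (1/2 : ℝ) from funext heq]
  have := ((ENNReal.continuous_rpow_const (y := (1/2:ℝ))).tendsto 0).comp hlim
  simpa [Function.comp_def, ENNReal.zero_rpow_of_pos (by norm_num : (0:ℝ) < 1/2)] using this

/-- Score construction for the tangent space: let `g` be bounded, measurable
and `P`-mean zero, and set `dP_ε = (1 + ε g) dP`. Then (i) for `|ε|·sup|g| < 1`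
each `P_ε` is a probability measure equivalent to `P`; (ii) for every bounded
measurable `f`, `ε ↦ ∫ f dP_ε` is differentiable at `0` with derivative
`∫ f g dP`; (iii) the submodel is differentiable in quadratic mean at `0` with
score `g`: `ε⁻¹(√(1 + ε g) − 1) → g/2` in `L²(P)` as `ε → 0`. -/
theorem score_construction {Ω : Type*} [MeasurableSpace Ω]
    (P : Measure Ω) [IsProbabilityMeasure P]
    (g : Ω → ℝ) (hg : Measurable g) (C : ℝ) (hgC : ∀ ω, |g ω| ≤ C)
    (hmean : ∫ ω, g ω ∂P = 0) :
    (∀ ε : ℝ, |ε| * C < 1 →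
      IsProbabilityMeasure (scorePerturb P g ε) ∧
        scorePerturb P g ε ≪ P ∧ P ≪ scorePerturb P g ε) ∧
    (∀ f : Ω → ℝ, Measurable f → ∀ D : ℝ, (∀ ω, |f ω| ≤ D) →
      HasDerivAt (fun ε : ℝ => ∫ ω, f ω ∂(scorePerturb P g ε))
        (∫ ω, f ω * g ω ∂P) 0) ∧
    Tendsto
      (fun ε : ℝ =>
        eLpNorm (fun ω => ε⁻¹ * (Real.sqrt (1 + ε * g ω) - 1) - g ω / 2) 2 P)
      (𝓝[≠] (0 : ℝ)) (𝓝 0) := by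
  have hΩ : Nonempty Ω := by
    by_contra h
    rw [not_nonempty_iff] at h
    have h1 := measure_univ (μ := P)
    rw [Set.univ_eq_empty_iff.mpr h] at h1
    simp at h1
  have hC0 : 0 ≤ C := le_trans (abs_nonneg _) (hgC (Classical.arbitrary Ω))
  obtain ⟨h1, h2⟩ := score_construction_parts12 P g hg C hgC hmean
  exact ⟨h1, h2, score_part3 P g hg C hgC hC0⟩
end

section
/- (Conditionally independent counterfactual copy.) Let X and Y be nonempty standard Borel spaces and let P be a probability measure on X × Y. Then there exists a probability measure Q on X × Y × Y such that: (i) the pushforward of Q under (x, y, y') ↦ (x, y) equals P; (ii) the pushforward of Q under (x, y, y') ↦ (x, y') equals P; and (iii) under Q, the second and third coordinates are conditionally independent given the σ-algebra generated by the first coordinate. (This construction — attaching to the observed data a copy of the outcome drawn independently from the same conditional law given the history — is the device used to extend any observed-data law P to a full-data law P^F on observed plus counterfactual variables that satisfies the sequential randomization and consistency assumptions while inducing P, showing the identification assumptions place no restriction on the observed data distribution.) -/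
open MeasureTheory ProbabilityTheory
open scoped ENNReal

section Aux
variable {X Y : Type*} [MeasurableSpace X] [MeasurableSpace Y]
  [StandardBorelSpace X] [StandardBorelSpace Y] [Nonempty X] [Nonempty Y]

/-- Key condexp computation. -/
lemma aux_condexp (μ : Measure X) [IsProbabilityMeasure μ]
    (κ : Kernel X Y) [IsMarkovKernel κ]
    {s t : Set Y} (hs : MeasurableSet s) (ht : MeasurableSet t) :
    ((μ ⊗ₘ (κ ×ₖ κ))⟦((fun p : X × Y × Y => p.2.1) ⁻¹' s) ∩ ((fun p : X × Y × Y => p.2.2) ⁻¹' t) |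
      MeasurableSpace.comap (fun p : X × Y × Y => p.1) inferInstance⟧)
      =ᵐ[μ ⊗ₘ (κ ×ₖ κ)] fun p => ((κ p.1) s * (κ p.1) t).toReal := by
  have hm' : MeasurableSpace.comap (fun p : X × Y × Y => p.1) inferInstance ≤
      (inferInstance : MeasurableSpace (X × Y × Y)) := measurable_fst.comap_le
  set Q := μ ⊗ₘ (κ ×ₖ κ) with hQ
  set g : X × Y × Y → ℝ := fun p => ((κ p.1) s * (κ p.1) t).toReal with hg
  have hAB : MeasurableSet (((fun p : X × Y × Y => p.2.1) ⁻¹' s) ∩ ((fun p : X × Y × Y => p.2.2) ⁻¹' t)) :=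
    ((measurable_fst.comp measurable_snd) hs).inter ((measurable_snd.comp measurable_snd) ht)
  have hGmeas : Measurable (fun x : X => (κ x) s * (κ x) t) :=
    (Kernel.measurable_coe κ hs).mul (Kernel.measurable_coe κ ht)
  have hgm' : Measurable[MeasurableSpace.comap (fun p : X × Y × Y => p.1) inferInstance] g := by
    have hfst : Measurable[MeasurableSpace.comap (fun p : X × Y × Y => p.1) inferInstance]
        (fun p : X × Y × Y => p.1) := Measurable.of_comap_le le_rfl
    exact (hGmeas.ennreal_toReal).comp hfst
  have hgmeas : Measurable g := hgm'.mono hm' le_rfl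
  have hgbound : ∀ p, ‖g p‖ ≤ 1 := by
    intro p
    rw [Real.norm_eq_abs, abs_of_nonneg ENNReal.toReal_nonneg]
    have h1 : (κ p.1) s * (κ p.1) t ≤ 1 :=
      mul_le_one' prob_le_one prob_le_one
    calc ((κ p.1) s * (κ p.1) t).toReal ≤ (1 : ℝ≥0∞).toReal :=
      ENNReal.toReal_mono ENNReal.one_ne_top h1
    _ = 1 := by simp
  have hgint : Integrable g Q :=
    (integrable_const (1:ℝ)).mono' hgmeas.aestronglyMeasurable
      (Filter.Eventually.of_forall hgbound)
  symm
  refine ae_eq_condExp_of_forall_setIntegral_eq hm'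
    ((integrable_const (1:ℝ)).indicator hAB) (fun E _ _ => hgint.integrableOn)
    (fun E hE _ => ?_) (StronglyMeasurable.aestronglyMeasurable hgm'.stronglyMeasurable)
  obtain ⟨u, hu, rfl⟩ := hE
  -- RHS: indicator integral
  have hinter : ((fun p : X × Y × Y => p.1) ⁻¹' u) ∩
      (((fun p : X × Y × Y => p.2.1) ⁻¹' s) ∩ ((fun p : X × Y × Y => p.2.2) ⁻¹' t))
      = u ×ˢ (s ×ˢ t) := by
    ext ⟨x, y, y'⟩; simp [Set.mem_prod, and_assoc]
  have hrhs : ∫ p in (fun p : X × Y × Y => p.1) ⁻¹' u,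
      (((fun p : X × Y × Y => p.2.1) ⁻¹' s) ∩ ((fun p : X × Y × Y => p.2.2) ⁻¹' t)).indicator
        (fun _ => (1:ℝ)) p ∂Q
      = (Q (u ×ˢ (s ×ˢ t))).toReal := by
    rw [setIntegral_indicator hAB, ← hinter]
    · rw [Set.inter_comm]
      simp [Measure.restrict_apply (hAB.inter (measurable_fst hu)), measureReal_def]
  have hQprod : Q (u ×ˢ (s ×ˢ t)) = ∫⁻ x in u, (κ x) s * (κ x) t ∂μ := by
    rw [hQ, Measure.compProd_apply_prod hu (hs.prod ht)]
    congr 1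
    ext x
    rw [Kernel.prod_apply, Measure.prod_prod]
  -- LHS
  have hmapfst : Q.map (fun p : X × Y × Y => p.1) = μ := by
    rw [hQ]
    exact Measure.fst_compProd μ (κ ×ₖ κ)
  have hlhs : ∫ p in (fun p : X × Y × Y => p.1) ⁻¹' u, g p ∂Q
      = ∫ x in u, ((κ x) s * (κ x) t).toReal ∂μ := by
    rw [← hmapfst, setIntegral_map hu (hGmeas.ennreal_toReal).aestronglyMeasurable
      measurable_fst.aemeasurable]
  rw [hlhs, hrhs, hQprod, integral_toReal]
  · exact (hGmeas.aemeasurable).restrict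
  · filter_upwards with x
    exact lt_of_le_of_lt (mul_le_one' prob_le_one prob_le_one) ENNReal.one_lt_top

end Aux

/-- Conditionally independent counterfactual copy: for nonempty standard Borel
spaces `X, Y` and a probability measure `P` on `X × Y`, there is a probability
measure `Q` on `X × Y × Y` whose `(x, y)`- and `(x, y')`-marginals both equal
`P`, and under which the second and third coordinates are conditionally
independent given the σ-algebra generated by the first coordinate. -/
theorem exists_condIndep_counterfactual_copy {X Y : Type*}
    [MeasurableSpace X] [MeasurableSpace Y]
    [StandardBorelSpace X] [StandardBorelSpace Y] [Nonempty X] [Nonempty Y]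
    (P : Measure (X × Y)) [IsProbabilityMeasure P] :
    ∃ (Q : Measure (X × Y × Y)) (_ : IsProbabilityMeasure Q),
      Q.map (fun p => (p.1, p.2.1)) = P ∧
      Q.map (fun p => (p.1, p.2.2)) = P ∧
      CondIndepFun (MeasurableSpace.comap (fun p : X × Y × Y => p.1) inferInstance)
        (measurable_fst.comap_le)
        (fun p : X × Y × Y => p.2.1) (fun p : X × Y × Y => p.2.2) Q := by
  set μ := P.fst with hμ
  set κ := P.condKernel with hκ
  set Q : Measure (X × Y × Y) := μ ⊗ₘ (κ ×ₖ κ) with hQ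
  have hQP : μ ⊗ₘ κ = P := P.disintegrate P.condKernel
  refine ⟨Q, inferInstance, ?_, ?_, ?_⟩
  · -- first marginal
    ext s hs
    rw [Measure.map_apply (show Measurable (fun p : X × Y × Y => (p.1, p.2.1)) by fun_prop) hs,
      hQ, Measure.compProd_apply (by exact (show Measurable (fun p : X × Y × Y => (p.1, p.2.1)) by fun_prop) hs),
      ← hQP, Measure.compProd_apply hs]
    congr 1
    ext x
    have : (Prod.mk x ⁻¹' ((fun p : X × Y × Y => (p.1, p.2.1)) ⁻¹' s))
        = Prod.fst ⁻¹' (Prod.mk x ⁻¹' s) := rfl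
    rw [this, Kernel.prod_apply, ← Measure.map_apply measurable_fst (measurable_prodMk_left hs)]
    simp
  · -- second marginal
    ext s hs
    rw [Measure.map_apply (show Measurable (fun p : X × Y × Y => (p.1, p.2.2)) by fun_prop) hs,
      hQ, Measure.compProd_apply (by exact (show Measurable (fun p : X × Y × Y => (p.1, p.2.2)) by fun_prop) hs),
      ← hQP, Measure.compProd_apply hs]
    congr 1
    ext x
    have : (Prod.mk x ⁻¹' ((fun p : X × Y × Y => (p.1, p.2.2)) ⁻¹' s))
        = Prod.snd ⁻¹' (Prod.mk x ⁻¹' s) := rfl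
    rw [this, Kernel.prod_apply, ← Measure.map_apply measurable_snd (measurable_prodMk_left hs)]
    simp
  · -- conditional independence
    rw [condIndepFun_iff_condExp_inter_preimage_eq_mul
      (show Measurable (fun p : X × Y × Y => p.2.1) by fun_prop)
      (show Measurable (fun p : X × Y × Y => p.2.2) by fun_prop)]
    intro s t hs ht
    have h1 := aux_condexp μ κ hs ht
    have h2 := aux_condexp μ κ hs MeasurableSet.univ
    have h3 := aux_condexp μ κ MeasurableSet.univ ht
    simp only [Set.preimage_univ, Set.inter_univ, Set.univ_inter, measure_univ, mul_one, one_mul]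
      at h2 h3
    filter_upwards [h1, h2, h3] with p hp1 hp2 hp3
    rw [hp1, hp2, hp3, ENNReal.toReal_mul]
end
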